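/- arXiv:2506.21421 — 3 statements merged into one kernel-verified Lean document; each statement's English description precedes it below -/
import Mathlib

section
/- Let $(X,\mu,T)$ be a probability measure-preserving system. The dominated ergodic theorem: for every $p>1$ and $f\in L^p(\mu)$, the maximal function $\mathbf{A}^* f := \sup_{k\in\mathbb{N}} \frac{1}{k}\sum_{j=0}^{k-1} |f|\circ T^j$ satisfies $\|\mathbf{A}^* f\|_p \le \frac{p}{p-1}\|f\|_p$. -/
open MeasureTheory Metric Filter Set ENNReal
noncomputable section

/-- The σ-algebra of T-invariant measurable sets. -/
def invSigma {X : Type*} [MeasurableSpace X] (T : X → X) : MeasurableSpace X where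
  MeasurableSet' s := MeasurableSet s ∧ T ⁻¹' s = s
  measurableSet_empty := ⟨MeasurableSet.empty, rfl⟩
  measurableSet_compl s hs := ⟨hs.1.compl, by rw [Set.preimage_compl, hs.2]⟩
  measurableSet_iUnion f hf := ⟨MeasurableSet.iUnion fun i => (hf i).1, by
    simp only [Set.preimage_iUnion]; exact Set.iUnion_congr fun i => (hf i).2⟩

/-- Birkhoff sum. -/
def bS {X : Type*} (T : X → X) (φ : X → ℝ) (n : ℕ) (x : X) : ℝ :=
  ∑ j ∈ Finset.range n, φ (T^[j] x)

lemma bS_succ {X : Type*} (T : X → X) (φ : X → ℝ) (n : ℕ) (x : X) :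
    bS T φ (n + 1) x = φ x + bS T φ n (T x) := by
  unfold bS
  rw [Finset.sum_range_succ']
  simp [Function.iterate_succ_apply, add_comm]

lemma bS_meas {X : Type*} [MeasurableSpace X] {T : X → X} (hTm : Measurable T)
    {φ : X → ℝ} (hφm : Measurable φ) (n : ℕ) : Measurable (fun x => bS T φ n x) :=
  Finset.measurable_sum _ (fun j _ => hφm.comp (hTm.iterate j))

/-- Garsia's maximal ergodic theorem: the integral of `φ` over the set where some
Birkhoff sum `S_n φ` with `1 ≤ n ≤ N+1` is nonnegative, is nonnegative. -/
lemma garsia {X : Type*} [MeasurableSpace X] (μ : Measure X) [IsProbabilityMeasure μ]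
    (T : X → X) (hT : MeasurePreserving T μ μ) (φ : X → ℝ) (hφm : Measurable φ)
    (hφi : Integrable φ μ) (N : ℕ) :
    0 ≤ ∫ x in {x | 0 ≤ (Finset.range (N + 1)).sup'
        Finset.nonempty_range_add_one (fun n => bS T φ (n + 1) x)}, φ x ∂μ := by
  set M : X → ℝ := fun x => (Finset.range (N + 1)).sup'
      Finset.nonempty_range_add_one (fun n => bS T φ (n + 1) x) with hM
  have hMm : Measurable M := by
    have h := Finset.measurable_sup' (s := Finset.range (N + 1)) Finset.nonempty_range_add_one
      (f := fun n => fun x => bS T φ (n + 1) x) (fun n _ => bS_meas hT.measurable hφm (n + 1))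
    convert h using 1
    ext x
    rw [Finset.sup'_apply]
  set E : Set X := {x | 0 ≤ M x} with hE
  have hEm : MeasurableSet E := measurableSet_le measurable_const hMm
  set P : X → ℝ := fun x => max (M x) 0 with hP
  have hPm : Measurable P := hMm.max measurable_const
  have hcomp : ∀ j, Integrable (fun x => φ (T^[j] x)) μ := fun j =>
    ((hT.iterate j).integrable_comp hφm.aestronglyMeasurable).2 hφi
  set B : X → ℝ := fun x => ∑ j ∈ Finset.range (N + 2), |φ (T^[j] x)| with hB
  have hBi : Integrable B μ := integrable_finset_sum _ (fun j _ => (hcomp j).abs)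
  have hSB : ∀ n x, n ≤ N + 2 → bS T φ n x ≤ B x := by
    intro n x hn
    calc bS T φ n x ≤ ∑ j ∈ Finset.range n, |φ (T^[j] x)| :=
          Finset.sum_le_sum (fun j _ => le_abs_self _)
      _ ≤ B x := Finset.sum_le_sum_of_subset_of_nonneg
          (Finset.range_subset_range.2 hn) (fun j _ _ => abs_nonneg _)
  have hPB : ∀ x, ‖P x‖ ≤ B x := by
    intro x
    have hB0 : 0 ≤ B x := Finset.sum_nonneg (fun j _ => abs_nonneg _)
    rw [Real.norm_eq_abs, abs_of_nonneg (le_max_right _ _)]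
    show max (M x) 0 ≤ B x
    rcases le_or_gt (M x) 0 with h | h
    · rw [max_eq_right h]; exact hB0
    · rw [max_eq_left h.le]
      obtain ⟨n, hn, hne⟩ := Finset.exists_mem_eq_sup' Finset.nonempty_range_add_one
        (fun n => bS T φ (n + 1) x)
      exact le_trans (le_of_eq hne) (hSB _ _ (by
        have := Finset.mem_range.1 hn; omega))
  have key : ∀ x, P x - P (T x) ≤ E.indicator φ x := by
    intro x
    have hPT0 : 0 ≤ P (T x) := le_max_right _ _
    by_cases hx : x ∈ E
    · rw [Set.indicator_of_mem hx]
      have hMx : 0 ≤ M x := hx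
      have hPx : P x = M x := max_eq_left hMx
      obtain ⟨n, hn, hne⟩ := Finset.exists_mem_eq_sup' Finset.nonempty_range_add_one
        (fun n => bS T φ (n + 1) x)
      have h1 : M x = φ x + bS T φ n (T x) := by
        rw [hM]; simp only []; rw [hne]; exact bS_succ T φ n x
      have h2 : bS T φ n (T x) ≤ P (T x) := by
        rcases Nat.eq_zero_or_pos n with h0 | h0
        · subst h0; simp [bS, hPT0]
        · obtain ⟨m, rfl⟩ := Nat.exists_eq_add_of_lt h0
          simp only [Nat.zero_add] at *
          have hm : m ∈ Finset.range (N + 1) := Finset.mem_range.2 (by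
            have := Finset.mem_range.1 hn; omega)
          calc bS T φ (m + 1) (T x) ≤ M (T x) :=
                Finset.le_sup' (fun n => bS T φ (n + 1) (T x)) hm
            _ ≤ P (T x) := le_max_left _ _
      linarith
    · rw [Set.indicator_of_notMem hx]
      have hPx : P x = 0 := max_eq_right (le_of_not_ge hx)
      linarith
  have hPi : Integrable P μ := hBi.mono' hPm.aestronglyMeasurable (Filter.Eventually.of_forall hPB)
  have hPTi : Integrable (fun x => P (T x)) μ :=
    (hT.integrable_comp hPm.aestronglyMeasurable).2 hPi
  have hint : ∫ x, P (T x) ∂μ = ∫ x, P x ∂μ := by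
    calc ∫ x, P (T x) ∂μ = ∫ y, P y ∂(Measure.map T μ) :=
          (integral_map hT.measurable.aemeasurable hPm.aestronglyMeasurable).symm
      _ = ∫ x, P x ∂μ := by rw [hT.map_eq]
  have h0 : ∫ x, (P x - P (T x)) ∂μ = 0 := by
    rw [integral_sub hPi hPTi, hint, sub_self]
  have hmono := integral_mono (hPi.sub hPTi) (hφi.indicator hEm) key
  simp only [Pi.sub_apply] at hmono
  rw [h0] at hmono
  rwa [integral_indicator hEm] at hmono

/-- Truncated maximal function (real-valued): max over `0 ≤ k ≤ N` of `S_k g / k`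
(the `k = 0` term is `0` by division-by-zero convention). -/
def mxR {X : Type*} (T : X → X) (g : X → ℝ) (N : ℕ) (x : X) : ℝ :=
  (Finset.range (N + 1)).sup' Finset.nonempty_range_add_one (fun k => bS T g k x / k)

lemma mxR_meas {X : Type*} [MeasurableSpace X] {T : X → X} (hTm : Measurable T)
    {g : X → ℝ} (hgm : Measurable g) (N : ℕ) : Measurable (mxR T g N) := by
  have h := Finset.measurable_sup' (s := Finset.range (N + 1)) Finset.nonempty_range_add_one
    (f := fun k => fun x => bS T g k x / k)
    (fun k _ => (bS_meas hTm hgm k).div_const _)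
  convert h using 1
  ext x
  rw [Finset.sup'_apply]
  rfl

lemma bS_sub_const {X : Type*} (T : X → X) (g : X → ℝ) (t : ℝ) (n : ℕ) (x : X) :
    bS T (fun y => g y - t) n x = bS T g n x - n * t := by
  unfold bS
  rw [Finset.sum_sub_distrib, Finset.sum_const, Finset.card_range]
  simp [nsmul_eq_mul]

/-- The weak maximal estimate from Garsia's lemma. -/
lemma weak_max {X : Type*} [MeasurableSpace X] (μ : Measure X) [IsProbabilityMeasure μ]
    (T : X → X) (hT : MeasurePreserving T μ μ) (g : X → ℝ) (hgm : Measurable g)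
    (hgnn : ∀ x, 0 ≤ g x) (hgi : Integrable g μ) (N : ℕ) {t : ℝ} (ht : 0 < t) :
    ENNReal.ofReal t * μ {x | t ≤ mxR T g (N + 1) x}
      ≤ ∫⁻ x in {x | t ≤ mxR T g (N + 1) x}, ENNReal.ofReal (g x) ∂μ := by
  set φ : X → ℝ := fun y => g y - t with hφ
  have hφm : Measurable φ := hgm.sub measurable_const
  have hφi : Integrable φ μ := hgi.sub (integrable_const t)
  set E : Set X := {x | t ≤ mxR T g (N + 1) x} with hEdef
  have hEm : MeasurableSet E :=
    measurableSet_le measurable_const (mxR_meas hT.measurable hgm (N + 1))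
  have hEq : E = {x | 0 ≤ (Finset.range (N + 1)).sup'
      Finset.nonempty_range_add_one (fun n => bS T φ (n + 1) x)} := by
    ext x
    simp only [hEdef, Set.mem_setOf_eq, mxR, Finset.le_sup'_iff]
    constructor
    · rintro ⟨k, hk, hkt⟩
      rcases Nat.eq_zero_or_pos k with rfl | hk0
      · exfalso
        simp only [bS, Finset.range_zero, Finset.sum_empty, Nat.cast_zero, _root_.div_zero] at hkt
        linarith
      · obtain ⟨n, rfl⟩ := Nat.exists_eq_add_of_lt hk0
        simp only [Nat.zero_add] at *
        refine ⟨n, Finset.mem_range.2 (by have := Finset.mem_range.1 hk; omega), ?_⟩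
        rw [bS_sub_const]
        have hpos : (0 : ℝ) < (n + 1 : ℕ) := by positivity
        rw [le_div_iff₀ hpos] at hkt
        nlinarith [hkt]
    · rintro ⟨n, hn, hnt⟩
      rw [bS_sub_const] at hnt
      refine ⟨n + 1, Finset.mem_range.2 (by have := Finset.mem_range.1 hn; omega), ?_⟩
      have hpos : (0 : ℝ) < ((n + 1 : ℕ) : ℝ) := by positivity
      rw [le_div_iff₀ hpos]
      push_cast at hnt ⊢
      nlinarith [hnt]
  have hg0 := garsia μ T hT φ hφm hφi N
  rw [← hEq] at hg0
  have hsub : ∫ x in E, φ x ∂μ = ∫ x in E, g x ∂μ - t * (μ E).toReal := by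
    rw [hφ]
    rw [integral_sub hgi.integrableOn (integrable_const t).integrableOn]
    rw [setIntegral_const]
    ring_nf
    rw [measureReal_def]
  have hkey : t * (μ E).toReal ≤ ∫ x in E, g x ∂μ := by
    rw [hsub] at hg0; linarith
  calc ENNReal.ofReal t * μ E = ENNReal.ofReal (t * (μ E).toReal) := by
        rw [ENNReal.ofReal_mul ht.le, ENNReal.ofReal_toReal (measure_ne_top μ E)]
    _ ≤ ENNReal.ofReal (∫ x in E, g x ∂μ) := ENNReal.ofReal_le_ofReal hkey
    _ = ∫⁻ x in E, ENNReal.ofReal (g x) ∂μ := by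
        exact ofReal_integral_eq_lintegral_ofReal hgi.integrableOn (ae_of_all _ hgnn)

lemma mxR_nonneg {X : Type*} (T : X → X) (g : X → ℝ) (N : ℕ) (x : X) :
    0 ≤ mxR T g N x := by
  have h0 : (0 : ℕ) ∈ Finset.range (N + 1) := Finset.mem_range.2 (Nat.succ_pos N)
  unfold mxR
  refine le_trans (le_of_eq ?_) (Finset.le_sup' (fun k => bS T g k x / k) h0)
  simp [bS]

lemma mxR_le_bS {X : Type*} (T : X → X) {g : X → ℝ} (hgnn : ∀ x, 0 ≤ g x) (N : ℕ) (x : X) :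
    mxR T g N x ≤ bS T g (N + 1) x := by
  apply Finset.sup'_le
  intro k hk
  have hkn : k ≤ N + 1 := by have := Finset.mem_range.1 hk; omega
  have hbnn : ∀ m, 0 ≤ bS T g m x := fun m => Finset.sum_nonneg (fun j _ => hgnn _)
  have hmono : bS T g k x ≤ bS T g (N + 1) x :=
    Finset.sum_le_sum_of_subset_of_nonneg (Finset.range_subset_range.2 hkn) (fun j _ _ => hgnn _)
  rcases Nat.eq_zero_or_pos k with rfl | hk0
  · simpa [bS] using hbnn (N + 1)
  · calc bS T g k x / k ≤ bS T g k x :=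
          div_le_self (hbnn k) (by exact_mod_cast hk0)
      _ ≤ bS T g (N + 1) x := hmono

/-- Lintegral of the `p`-th power is finite for `MemLp` functions. -/
lemma lint_rpow_lt_top {X : Type*} [MeasurableSpace X] {μ : Measure X} {p : ℝ} (hp0 : 0 < p)
    {h : X → ℝ} (hh : MemLp h (ENNReal.ofReal p) μ) :
    ∫⁻ x, (‖h x‖₊ : ℝ≥0∞) ^ p ∂μ < ∞ := by
  have hne0 : ENNReal.ofReal p ≠ 0 := by simp [ENNReal.ofReal_eq_zero, not_le, hp0]
  have hnetop : ENNReal.ofReal p ≠ ∞ := ENNReal.ofReal_ne_top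
  have h2 := hh.2
  rw [eLpNorm_eq_lintegral_rpow_enorm_toReal hne0 hnetop, ENNReal.toReal_ofReal hp0.le] at h2
  exact (ENNReal.rpow_lt_top_iff_of_pos (by positivity : (0:ℝ) < 1 / p)).1 h2

lemma K_eval {p : ℝ} (hp : 1 < p) {a : ℝ} (ha : 0 ≤ a) :
    ∫⁻ t in Ioc 0 a, (ENNReal.ofReal t)⁻¹ * ENNReal.ofReal (t ^ (p - 1))
      = ENNReal.ofReal (a ^ (p - 1) / (p - 1)) := by
  have h1 : ∀ t ∈ Ioc (0:ℝ) a,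
      (ENNReal.ofReal t)⁻¹ * ENNReal.ofReal (t ^ (p - 1)) = ENNReal.ofReal (t ^ (p - 2)) := by
    intro t ht
    obtain ⟨ht0, _⟩ := ht
    have hsplit : t ^ (p - 1) = t * t ^ (p - 2) := by
      rw [show p - 1 = 1 + (p - 2) by ring, Real.rpow_add ht0, Real.rpow_one]
    rw [hsplit, ENNReal.ofReal_mul ht0.le, ← mul_assoc,
      ENNReal.inv_mul_cancel (by simp [ht0] : ENNReal.ofReal t ≠ 0) ENNReal.ofReal_ne_top,
      one_mul]
  rw [setLIntegral_congr_fun measurableSet_Ioc h1]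
  have hint : IntegrableOn (fun t => t ^ (p - 2)) (Ioc 0 a) volume :=
    (intervalIntegral.intervalIntegrable_rpow' (by linarith) (a := 0) (b := a)).1
  have hnn : 0 ≤ᵐ[volume.restrict (Ioc (0:ℝ) a)] fun t => t ^ (p - 2) := by
    filter_upwards [self_mem_ae_restrict measurableSet_Ioc] with t ht
    exact Real.rpow_nonneg ht.1.le _
  rw [← ofReal_integral_eq_lintegral_ofReal hint hnn]
  congr 1
  rw [← intervalIntegral.integral_of_le ha, integral_rpow (Or.inl (by linarith)),
    Real.zero_rpow (by linarith : p - 2 + 1 ≠ 0), show p - 2 + 1 = p - 1 by ring]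
  ring

lemma lp_max {X : Type*} [MeasurableSpace X] (μ : Measure X) [IsProbabilityMeasure μ]
    (T : X → X) (hT : MeasurePreserving T μ μ) {g : X → ℝ} (hgm : Measurable g)
    (hgnn : ∀ x, 0 ≤ g x) {p : ℝ} (hp : 1 < p) (hg : MemLp g (ENNReal.ofReal p) μ) (N : ℕ) :
    (∫⁻ x, ENNReal.ofReal (mxR T g (N + 1) x) ^ p ∂μ) ^ (1 / p)
      ≤ ENNReal.ofReal (p / (p - 1)) * (∫⁻ x, ENNReal.ofReal (g x) ^ p ∂μ) ^ (1 / p) := by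
  have hp0 : 0 < p := lt_trans one_pos hp
  set R := mxR T g (N + 1) with hRdef
  have hRm : Measurable R := mxR_meas hT.measurable hgm (N + 1)
  have hRnn : ∀ x, 0 ≤ R x := mxR_nonneg T g (N + 1)
  set G : X → ℝ≥0∞ := fun x => ENNReal.ofReal (g x) with hGdef
  have hGm : Measurable G := ENNReal.measurable_ofReal.comp hgm
  set I := ∫⁻ x, ENNReal.ofReal (R x) ^ p ∂μ with hIdef
  set A := (∫⁻ x, G x ^ p ∂μ) ^ (1 / p) with hAdef
  set C := ENNReal.ofReal (p / (p - 1)) with hCdef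
  have hgi : Integrable g μ := hg.integrable (by
    rw [← ENNReal.ofReal_one]; exact ENNReal.ofReal_le_ofReal hp.le)
  -- finiteness of I
  have hIlt : I < ∞ := by
    have hSmem : MemLp (fun x => bS T g (N + 2) x) (ENNReal.ofReal p) μ := by
      apply memLp_finset_sum
      intro j _
      exact hg.comp_measurePreserving (hT.iterate j)
    have hle : ∀ x, ENNReal.ofReal (R x) ^ p ≤ (‖bS T g (N + 2) x‖₊ : ℝ≥0∞) ^ p := by
      intro x
      apply ENNReal.rpow_le_rpow _ hp0.le
      change _ ≤ ‖bS T g (N + 2) x‖ₑ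
      rw [Real.enorm_eq_ofReal
        (show (0:ℝ) ≤ bS T g (N + 2) x from Finset.sum_nonneg (fun j _ => hgnn _))]
      exact ENNReal.ofReal_le_ofReal (mxR_le_bS T hgnn (N + 1) x)
    exact lt_of_le_of_lt (lintegral_mono hle) (lint_rpow_lt_top hp0 hSmem)
  -- the scalar weight
  set c : ℝ → ℝ≥0∞ := fun t => (ENNReal.ofReal t)⁻¹ * ENNReal.ofReal (t ^ (p - 1)) with hcdef
  have hrpc : Measurable (fun t : ℝ => t ^ (p - 1)) :=
    (Real.continuous_rpow_const (by linarith : (0:ℝ) ≤ p - 1)).measurable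
  have hcm : Measurable c :=
    (ENNReal.measurable_ofReal.inv).mul (ENNReal.measurable_ofReal.comp hrpc)
  set H : ℝ → X → ℝ≥0∞ := fun t x => ({a | t ≤ R a}.indicator G x) * c t with hHdef
  have hSetm : MeasurableSet {q : ℝ × X | q.1 ≤ R q.2} :=
    measurableSet_le measurable_fst (hRm.comp measurable_snd)
  have hHum : Measurable (Function.uncurry H) := by
    have heq : Function.uncurry H = fun q : ℝ × X =>
        ({q : ℝ × X | q.1 ≤ R q.2}.indicator (fun q => G q.2) q) * c q.1 := by
      ext ⟨t, x⟩
      by_cases h : t ≤ R x <;>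
        simp [Function.uncurry, hHdef, Set.indicator, h]
    rw [heq]
    exact (((hGm.comp measurable_snd).indicator hSetm)).mul (hcm.comp measurable_fst)
  -- step 1: layer cake
  have step1 : I = ENNReal.ofReal p
      * ∫⁻ t in Ioi (0:ℝ), μ {a | t ≤ R a} * ENNReal.ofReal (t ^ (p - 1)) := by
    have hlc := lintegral_rpow_eq_lintegral_meas_le_mul μ (ae_of_all _ hRnn)
      hRm.aemeasurable hp0
    rw [hIdef, ← hlc]
    apply lintegral_congr
    intro x
    rw [ENNReal.ofReal_rpow_of_nonneg (hRnn x) hp0.le]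
  -- step 2: weak-type bound pointwise in t
  have step2 : ∀ t ∈ Ioi (0:ℝ), μ {a | t ≤ R a} * ENNReal.ofReal (t ^ (p - 1))
      ≤ ∫⁻ x, H t x ∂μ := by
    intro t ht
    have htpos : (0:ℝ) < t := ht
    have hEm : MeasurableSet {a | t ≤ R a} := measurableSet_le measurable_const hRm
    have hw := weak_max μ T hT g hgm hgnn hgi N htpos
    have htne : ENNReal.ofReal t ≠ 0 := by simp [htpos]
    have hμE : μ {a | t ≤ R a} ≤ (ENNReal.ofReal t)⁻¹ * ∫⁻ x in {a | t ≤ R a}, G x ∂μ := by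
      rw [← one_mul (μ _), ← ENNReal.inv_mul_cancel htne ENNReal.ofReal_ne_top, mul_assoc]
      exact mul_le_mul_right hw _
    calc μ {a | t ≤ R a} * ENNReal.ofReal (t ^ (p - 1))
        ≤ ((ENNReal.ofReal t)⁻¹ * ∫⁻ x in {a | t ≤ R a}, G x ∂μ) * ENNReal.ofReal (t ^ (p - 1)) :=
          mul_le_mul_left hμE _
      _ = (∫⁻ x in {a | t ≤ R a}, G x ∂μ) * c t := by rw [hcdef]; ring
      _ = (∫⁻ x, ({a | t ≤ R a}.indicator G) x ∂μ) * c t := by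
          rw [lintegral_indicator hEm]
      _ = ∫⁻ x, H t x ∂μ := by
          rw [hHdef, lintegral_mul_const _ (hGm.indicator hEm)]
  -- step 3: plug in and swap
  have step3 : I ≤ ENNReal.ofReal p * ∫⁻ x, ∫⁻ t in Ioi (0:ℝ), H t x ∂volume ∂μ := by
    rw [step1]
    apply mul_le_mul_right
    calc ∫⁻ t in Ioi (0:ℝ), μ {a | t ≤ R a} * ENNReal.ofReal (t ^ (p - 1))
        ≤ ∫⁻ t in Ioi (0:ℝ), ∫⁻ x, H t x ∂μ := by
          refine setLIntegral_mono (hHum.lintegral_prod_right) step2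
      _ = ∫⁻ x, ∫⁻ t in Ioi (0:ℝ), H t x ∂volume ∂μ := by
          exact lintegral_lintegral_swap hHum.aemeasurable
  -- step 4: evaluate the inner integral
  have step4 : ∀ x, ∫⁻ t in Ioi (0:ℝ), H t x ∂volume
      = G x * ENNReal.ofReal (R x ^ (p - 1) / (p - 1)) := by
    intro x
    have heq : ∀ t : ℝ, H t x = (Iic (R x)).indicator (fun t => G x * c t) t := by
      intro t
      by_cases h : t ≤ R x <;> simp [hHdef, Set.indicator, h]
    simp_rw [heq]
    rw [lintegral_indicator measurableSet_Iic, Measure.restrict_restrict measurableSet_Iic,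
      show Iic (R x) ∩ Ioi (0:ℝ) = Ioc 0 (R x) by rw [Set.inter_comm]; exact Set.Ioi_inter_Iic]
    rw [lintegral_const_mul _ hcm]
    rw [K_eval hp (hRnn x)]
  -- step 5: Hölder setup
  set Φ : X → ℝ≥0∞ := fun x => ENNReal.ofReal (R x) ^ (p - 1) with hΦdef
  have hΦeq : Φ = fun x => ENNReal.ofReal (R x ^ (p - 1)) :=
    funext fun x => ENNReal.ofReal_rpow_of_nonneg (hRnn x) (by linarith)
  have hΦm : Measurable Φ := by
    rw [hΦeq]
    exact ENNReal.measurable_ofReal.comp (hrpc.comp hRm)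
  have step5 : I ≤ C * ∫⁻ x, G x * Φ x ∂μ := by
    calc I ≤ ENNReal.ofReal p * ∫⁻ x, ∫⁻ t in Ioi (0:ℝ), H t x ∂volume ∂μ := step3
      _ = ENNReal.ofReal p * ∫⁻ x, G x * ENNReal.ofReal (R x ^ (p - 1) / (p - 1)) ∂μ := by
          congr 1; exact lintegral_congr step4
      _ = ENNReal.ofReal p * ∫⁻ x, (G x * Φ x) * ENNReal.ofReal ((p - 1)⁻¹) ∂μ := by
          congr 1
          apply lintegral_congr
          intro x
          have hx : Φ x = ENNReal.ofReal (R x ^ (p - 1)) :=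
            ENNReal.ofReal_rpow_of_nonneg (hRnn x) (by linarith)
          rw [hx, div_eq_mul_inv, ENNReal.ofReal_mul (Real.rpow_nonneg (hRnn x) _)]
          ring
      _ = ENNReal.ofReal p * ((∫⁻ x, G x * Φ x ∂μ) * ENNReal.ofReal ((p - 1)⁻¹)) := by
          rw [lintegral_mul_const (f := fun x => G x * Φ x) _ (hGm.mul hΦm)]
      _ = C * ∫⁻ x, G x * Φ x ∂μ := by
          rw [hCdef, div_eq_mul_inv, ENNReal.ofReal_mul hp0.le]
          ring
  -- step 6: Hölder inequality
  set q : ℝ := p / (p - 1) with hqdef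
  have hpq : p.HolderConjugate q := Real.HolderConjugate.conjExponent hp
  have step6 : ∫⁻ x, G x * Φ x ∂μ ≤ A * I ^ (1 / q) := by
    have hH := ENNReal.lintegral_mul_le_Lp_mul_Lq μ hpq hGm.aemeasurable hΦm.aemeasurable
    simp only [Pi.mul_apply] at hH
    have hΦq : ∫⁻ x, Φ x ^ q ∂μ = I := by
      apply lintegral_congr
      intro x
      rw [hΦdef, ← ENNReal.rpow_mul,
        show (p - 1) * q = p by
          rw [hqdef, ← mul_div_assoc, mul_div_cancel_left₀ _ (by linarith : p - 1 ≠ 0)]]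
    rw [hΦq] at hH
    exact hH
  -- step 7: conclude
  rcases eq_or_ne I 0 with h0 | hne
  · rw [h0, ENNReal.zero_rpow_of_pos (by positivity)]
    exact zero_le
  · have hq0 : I ^ (1 / q) ≠ 0 := by
      simp [ENNReal.rpow_eq_zero_iff, hne, hIlt.ne]
    have hq_pos : 0 < q := hpq.symm.pos
    have hqt : I ^ (1 / q) ≠ ∞ :=
      ENNReal.rpow_ne_top_of_nonneg (by positivity) hIlt.ne
    have key : I ^ (1 / p) * I ^ (1 / q) ≤ (C * A) * I ^ (1 / q) := by
      rw [← ENNReal.rpow_add _ _ hne hIlt.ne]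
      rw [show 1 / p + 1 / q = 1 by
        rw [one_div, one_div]; exact hpq.inv_add_inv_eq_one]
      rw [ENNReal.rpow_one]
      calc I ≤ C * (A * I ^ (1 / q)) := le_trans step5 (mul_le_mul_right step6 _)
        _ = (C * A) * I ^ (1 / q) := by ring
    exact (ENNReal.mul_le_mul_iff_left hq0 hqt).1 key

theorem stmt4 {X : Type*} [MeasurableSpace X] (μ : Measure X) [IsProbabilityMeasure μ]
    (T : X → X) (hT : MeasurePreserving T μ μ)
    (p : ℝ) (hp : 1 < p) (f : X → ℝ) (hf : MemLp f (ENNReal.ofReal p) μ) :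
    (∫⁻ x, (⨆ k : ℕ,
        (k : ℝ≥0∞)⁻¹ * ∑ j ∈ Finset.range k, (‖f (T^[j] x)‖₊ : ℝ≥0∞)) ^ p ∂μ) ^ (1 / p)
      ≤ ENNReal.ofReal (p / (p - 1)) * (∫⁻ x, (‖f x‖₊ : ℝ≥0∞) ^ p ∂μ) ^ (1 / p) := by
  have hp0 : 0 < p := lt_trans one_pos hp
  set f' := hf.1.mk f with hf'def
  have hff' : f =ᵐ[μ] f' := hf.1.ae_eq_mk
  have hf'm : Measurable f' := hf.1.stronglyMeasurable_mk.measurable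
  set g : X → ℝ := fun x => ‖f' x‖ with hgdef
  have hgm : Measurable g := hf'm.norm
  have hgnn : ∀ x, 0 ≤ g x := fun x => norm_nonneg _
  have hgLp : MemLp g (ENNReal.ofReal p) μ := (hf.ae_eq hff').norm
  -- a.e. identification of the norms along the orbit
  have hae : ∀ᵐ x ∂μ, ∀ j : ℕ,
      (‖f (T^[j] x)‖₊ : ℝ≥0∞) = ENNReal.ofReal (g (T^[j] x)) := by
    rw [ae_all_iff]
    intro j
    have h1 : (fun x => f (T^[j] x)) =ᵐ[μ] (fun x => f' (T^[j] x)) :=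
      ae_eq_comp ((hT.iterate j).measurable.aemeasurable)
        (by rwa [(hT.iterate j).map_eq])
    filter_upwards [h1] with x hx
    rw [show f (T^[j] x) = f' (T^[j] x) from hx]; exact (ofReal_norm (f' (T^[j] x))).symm
  -- pointwise identification of the maximal function
  have hsup : ∀ x, (∀ j : ℕ, (‖f (T^[j] x)‖₊ : ℝ≥0∞) = ENNReal.ofReal (g (T^[j] x))) →
      (⨆ k : ℕ, (k : ℝ≥0∞)⁻¹ * ∑ j ∈ Finset.range k, (‖f (T^[j] x)‖₊ : ℝ≥0∞))
        = ⨆ N : ℕ, ENNReal.ofReal (mxR T g (N + 1) x) := by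
    intro x hx
    have hAk : ∀ k : ℕ, (k : ℝ≥0∞)⁻¹ * ∑ j ∈ Finset.range k, (‖f (T^[j] x)‖₊ : ℝ≥0∞)
        = ENNReal.ofReal (bS T g k x / k) := by
      intro k
      rcases Nat.eq_zero_or_pos k with rfl | hk
      · simp [bS]
      · have hsum : ∑ j ∈ Finset.range k, (‖f (T^[j] x)‖₊ : ℝ≥0∞)
            = ENNReal.ofReal (bS T g k x) := by
          rw [show bS T g k x = ∑ j ∈ Finset.range k, g (T^[j] x) from rfl,
            ENNReal.ofReal_sum_of_nonneg (fun j _ => hgnn _)]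
          exact Finset.sum_congr rfl (fun j _ => hx j)
        have hkR : (0:ℝ) < (k : ℝ) := by exact_mod_cast hk
        rw [hsum, ← ENNReal.ofReal_natCast k, ← ENNReal.ofReal_inv_of_pos hkR,
          ← ENNReal.ofReal_mul (by positivity), inv_mul_eq_div]
    apply le_antisymm
    · apply iSup_le
      intro k
      rw [hAk k]
      refine le_trans ?_ (le_iSup (fun N => ENNReal.ofReal (mxR T g (N + 1) x)) k)
      apply ENNReal.ofReal_le_ofReal
      exact Finset.le_sup' (fun m => bS T g m x / m) (Finset.mem_range.2 (by omega))
    · apply iSup_le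
      intro N
      obtain ⟨k, hk, hke⟩ := Finset.exists_mem_eq_sup'
        (Finset.nonempty_range_add_one (n := N + 1)) (fun m => bS T g m x / (m:ℝ))
      rw [show mxR T g (N + 1) x = bS T g k x / k from hke, ← hAk k]
      exact le_iSup (fun m : ℕ => ((m : ℕ) : ℝ≥0∞)⁻¹
        * ∑ j ∈ Finset.range m, (‖f (T^[j] x)‖₊ : ℝ≥0∞)) k
  -- rewrite the left-hand side
  have hmono : ∀ x, Monotone (fun N => ENNReal.ofReal (mxR T g (N + 1) x)) := by
    intro x N M hNM
    apply ENNReal.ofReal_le_ofReal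
    apply Finset.sup'_le
    intro k hk
    exact Finset.le_sup' (fun m => bS T g m x / (m:ℝ))
      (Finset.mem_range.2 (by have := Finset.mem_range.1 hk; omega))
  have hmeas : ∀ N : ℕ, Measurable (fun x => ENNReal.ofReal (mxR T g (N + 1) x) ^ p) := by
    intro N
    have : (fun x => ENNReal.ofReal (mxR T g (N + 1) x) ^ p)
        = fun x => ENNReal.ofReal (mxR T g (N + 1) x ^ p) :=
      funext fun x => ENNReal.ofReal_rpow_of_nonneg (mxR_nonneg T g (N + 1) x) hp0.le
    rw [this]
    exact ENNReal.measurable_ofReal.comp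
      ((Real.continuous_rpow_const hp0.le).measurable.comp (mxR_meas hT.measurable hgm (N + 1)))
  have hLHS : ∫⁻ x, (⨆ k : ℕ,
        (k : ℝ≥0∞)⁻¹ * ∑ j ∈ Finset.range k, (‖f (T^[j] x)‖₊ : ℝ≥0∞)) ^ p ∂μ
      = ⨆ N : ℕ, ∫⁻ x, ENNReal.ofReal (mxR T g (N + 1) x) ^ p ∂μ := by
    rw [← lintegral_iSup hmeas (fun N M h => fun x => ENNReal.rpow_le_rpow (hmono x h) hp0.le)]
    apply lintegral_congr_ae
    filter_upwards [hae] with x hx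
    rw [hsup x hx]
    exact (ENNReal.orderIsoRpow p hp0).map_iSup _
  -- rewrite the right-hand side
  have hRHS : ∫⁻ x, (‖f x‖₊ : ℝ≥0∞) ^ p ∂μ = ∫⁻ x, ENNReal.ofReal (g x) ^ p ∂μ := by
    apply lintegral_congr_ae
    filter_upwards [hae] with x hx
    have := hx 0
    rw [Function.iterate_zero_apply] at this
    rw [this]
  rw [hLHS, hRHS]
  have hisosup : (⨆ N : ℕ, ∫⁻ x, ENNReal.ofReal (mxR T g (N + 1) x) ^ p ∂μ) ^ (1 / p)
      = ⨆ N : ℕ, (∫⁻ x, ENNReal.ofReal (mxR T g (N + 1) x) ^ p ∂μ) ^ (1 / p) :=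
    (ENNReal.orderIsoRpow (1 / p) (by positivity)).map_iSup _
  rw [hisosup]
  apply iSup_le
  intro N
  exact lp_max μ T hT hgm hgnn hp hgLp N
end
end

section
/- Let $X$ be a metric space, $\mu$ a Borel probability measure with the Hardy–Littlewood property, and $T$ a $\mu$-preserving transformation. If $f\in L^\infty(\mu)$ satisfies $\mathbb{E}[f\mid\mathfrak{I}]=0$ (where $\mathfrak{I}$ is the $T$-invariant $\sigma$-algebra), then $U_{r,k}f(x) := \mu(B(x,r))^{-1}\int_{B(x,r)} \frac{1}{k}\sum_{j=0}^{k-1} f\circ T^j\, d\mu \to 0$ for $\mu$-almost every $x$ as $r\searrow 0$, $k\to\infty$ jointly. -/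
open MeasureTheory Metric Filter Set ENNReal
noncomputable section

open Function
set_option linter.unusedSectionVars false


section Aux
variable {X : Type*} [MeasurableSpace X] {μ : Measure X} [IsProbabilityMeasure μ]
  {T : X → X}

lemma integrable_of_bdd {ψ : X → ℝ} (hm : AEStronglyMeasurable ψ μ) {c : ℝ}
    (hb : ∀ x, |ψ x| ≤ c) : Integrable ψ μ :=
  ⟨hm, HasFiniteIntegral.of_bounded (C := c)
    (Filter.Eventually.of_forall fun x => by simpa [Real.norm_eq_abs] using hb x)⟩

lemma meas_birkhoffSum (hT : Measurable T) {φ : X → ℝ} (hφ : Measurable φ) (n : ℕ) :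
    Measurable (birkhoffSum T φ n) := by
  unfold birkhoffSum
  exact Finset.measurable_sum _ fun i _ => hφ.comp (hT.iterate i)

lemma meas_birkhoffAverage (hT : Measurable T) {φ : X → ℝ} (hφ : Measurable φ) (n : ℕ) :
    Measurable (birkhoffAverage ℝ T φ n) := by
  unfold birkhoffAverage
  exact (meas_birkhoffSum hT hφ n).const_smul ((n:ℝ)⁻¹)

lemma abs_birkhoffSum_le {φ : X → ℝ} {c : ℝ} (hb : ∀ x, |φ x| ≤ c) (n : ℕ) (x : X) :
    |birkhoffSum T φ n x| ≤ n * c := by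
  calc |birkhoffSum T φ n x| ≤ ∑ i ∈ Finset.range n, |φ (T^[i] x)| :=
        Finset.abs_sum_le_sum_abs _ _
    _ ≤ ∑ _i ∈ Finset.range n, c := Finset.sum_le_sum fun i _ => hb _
    _ = n * c := by simp [mul_comm]

lemma abs_birkhoffAverage_le {φ : X → ℝ} {c : ℝ} (hc : 0 ≤ c) (hb : ∀ x, |φ x| ≤ c)
    (n : ℕ) (x : X) : |birkhoffAverage ℝ T φ n x| ≤ c := by
  rcases Nat.eq_zero_or_pos n with rfl | hn
  · simp [birkhoffAverage, birkhoffSum, hc]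
  · have h1 : |birkhoffAverage ℝ T φ n x| = (n : ℝ)⁻¹ * |birkhoffSum T φ n x| := by
      rw [birkhoffAverage, smul_eq_mul, abs_mul, abs_inv, Nat.abs_cast]
    rw [h1]
    have hn' : (0:ℝ) < n := by exact_mod_cast hn
    calc (n : ℝ)⁻¹ * |birkhoffSum T φ n x| ≤ (n : ℝ)⁻¹ * (n * c) := by
          gcongr; exact abs_birkhoffSum_le hb n x
      _ = c := by field_simp

/-- sup-norm comparison of `A_k f` with `A_k (A_K f)`. -/
lemma birkhoffAverage_avg_close {φ : X → ℝ} {c : ℝ} (hc : 0 ≤ c) (hb : ∀ x, |φ x| ≤ c)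
    {K k : ℕ} (hK : 1 ≤ K) (hk : 1 ≤ k) (x : X) :
    |birkhoffAverage ℝ T φ k x - birkhoffAverage ℝ T (birkhoffAverage ℝ T φ K) k x|
      ≤ 2 * K * c / k := by
  have hKr : (0:ℝ) < K := by exact_mod_cast hK
  have hkr : (0:ℝ) < k := by exact_mod_cast hk
  have key : ∀ i : ℕ,
      |∑ j ∈ Finset.range k, φ (T^[j] x) - ∑ j ∈ Finset.range k, φ (T^[i + j] x)|
        ≤ 2 * i * c := by
    intro i
    have h1 : ∑ j ∈ Finset.range k, φ (T^[i + j] x)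
        = ∑ j ∈ Finset.Ico i (i + k), φ (T^[j] x) := by
      rw [Finset.sum_Ico_eq_sum_range]; simp
    have h2 : (∑ j ∈ Finset.Ico 0 i, φ (T^[j] x)) + ∑ j ∈ Finset.Ico i (i + k), φ (T^[j] x)
        = ∑ j ∈ Finset.Ico 0 (i + k), φ (T^[j] x) :=
      Finset.sum_Ico_consecutive _ (Nat.zero_le _) (Nat.le_add_right _ _)
    have h3 : (∑ j ∈ Finset.Ico 0 k, φ (T^[j] x)) + ∑ j ∈ Finset.Ico k (i + k), φ (T^[j] x)
        = ∑ j ∈ Finset.Ico 0 (i + k), φ (T^[j] x) :=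
      Finset.sum_Ico_consecutive _ (Nat.zero_le _) (Nat.le_add_left _ _)
    have habs : ∀ (a b : ℕ) (h : b - a ≤ i), |∑ j ∈ Finset.Ico a b, φ (T^[j] x)| ≤ i * c := by
      intro a b h
      calc |∑ j ∈ Finset.Ico a b, φ (T^[j] x)| ≤ ∑ j ∈ Finset.Ico a b, |φ (T^[j] x)| :=
            Finset.abs_sum_le_sum_abs _ _
        _ ≤ ∑ _j ∈ Finset.Ico a b, c := Finset.sum_le_sum fun j _ => hb _
        _ = (b - a : ℕ) * c := by simp [Nat.card_Ico, mul_comm]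
        _ ≤ i * c := by
            have : ((b - a : ℕ) : ℝ) ≤ (i : ℕ) := by exact_mod_cast h
            nlinarith [hb x, abs_nonneg (φ x)]
    have e : (∑ j ∈ Finset.range k, φ (T^[j] x)) - ∑ j ∈ Finset.range k, φ (T^[i+j] x)
        = (∑ j ∈ Finset.Ico 0 i, φ (T^[j] x)) - ∑ j ∈ Finset.Ico k (i + k), φ (T^[j] x) := by
      rw [h1, Finset.range_eq_Ico]
      linarith [h2, h3]
    rw [e]
    calc |(∑ j ∈ Finset.Ico 0 i, φ (T^[j] x)) - ∑ j ∈ Finset.Ico k (i + k), φ (T^[j] x)|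
        ≤ |∑ j ∈ Finset.Ico 0 i, φ (T^[j] x)| + |∑ j ∈ Finset.Ico k (i + k), φ (T^[j] x)| :=
          abs_sub _ _
      _ ≤ i * c + i * c := add_le_add (habs _ _ (by omega)) (habs _ _ (by omega))
      _ = 2 * i * c := by ring
  have hS : ∀ j, birkhoffAverage ℝ T φ K (T^[j] x)
      = (K:ℝ)⁻¹ * ∑ i ∈ Finset.range K, φ (T^[i + j] x) := by
    intro j
    simp [birkhoffAverage, birkhoffSum, smul_eq_mul, Function.iterate_add_apply]
  have hsum : birkhoffSum T φ k x - birkhoffSum T (birkhoffAverage ℝ T φ K) k x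
      = (K:ℝ)⁻¹ * ∑ i ∈ Finset.range K,
          ((∑ j ∈ Finset.range k, φ (T^[j] x)) - ∑ j ∈ Finset.range k, φ (T^[i + j] x)) := by
    rw [Finset.mul_sum]
    simp only [mul_sub, Finset.sum_sub_distrib]
    have c1 : ∑ _i ∈ Finset.range K, (K:ℝ)⁻¹ * ∑ j ∈ Finset.range k, φ (T^[j] x)
        = ∑ j ∈ Finset.range k, φ (T^[j] x) := by
      rw [Finset.sum_const, Finset.card_range, nsmul_eq_mul, ← mul_assoc,
        mul_inv_cancel₀ (ne_of_gt hKr), one_mul]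
    rw [c1]
    have c2 : birkhoffSum T (birkhoffAverage ℝ T φ K) k x
        = ∑ i ∈ Finset.range K, (K:ℝ)⁻¹ * ∑ j ∈ Finset.range k, φ (T^[i + j] x) := by
      unfold birkhoffSum
      simp only [hS, ← Finset.mul_sum]
      rw [Finset.sum_comm]
    rw [c2, birkhoffSum]
  have havg : birkhoffAverage ℝ T φ k x - birkhoffAverage ℝ T (birkhoffAverage ℝ T φ K) k x
      = (k:ℝ)⁻¹ * ((K:ℝ)⁻¹ * ∑ i ∈ Finset.range K,
          ((∑ j ∈ Finset.range k, φ (T^[j] x)) - ∑ j ∈ Finset.range k, φ (T^[i + j] x))) := by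
    rw [birkhoffAverage, birkhoffAverage, smul_eq_mul, smul_eq_mul, ← mul_sub, hsum]
  rw [havg]
  have hDb : |∑ i ∈ Finset.range K,
      ((∑ j ∈ Finset.range k, φ (T^[j] x)) - ∑ j ∈ Finset.range k, φ (T^[i + j] x))|
      ≤ K * (2 * K * c) := by
    calc |∑ i ∈ Finset.range K,
        ((∑ j ∈ Finset.range k, φ (T^[j] x)) - ∑ j ∈ Finset.range k, φ (T^[i + j] x))|
        ≤ ∑ i ∈ Finset.range K,
          |(∑ j ∈ Finset.range k, φ (T^[j] x)) - ∑ j ∈ Finset.range k, φ (T^[i + j] x)| :=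
          Finset.abs_sum_le_sum_abs _ _
      _ ≤ ∑ i ∈ Finset.range K, 2 * K * c := by
          refine Finset.sum_le_sum fun i hi => (key i).trans ?_
          have : (i:ℝ) ≤ K := by
            exact_mod_cast (Finset.mem_range.mp hi).le
          nlinarith
      _ = K * (2 * K * c) := by rw [Finset.sum_const, Finset.card_range, nsmul_eq_mul]
  rw [abs_mul, abs_mul, abs_inv, abs_inv, Nat.abs_cast, Nat.abs_cast]
  calc (k:ℝ)⁻¹ * ((K:ℝ)⁻¹ * |∑ i ∈ Finset.range K,
      ((∑ j ∈ Finset.range k, φ (T^[j] x)) - ∑ j ∈ Finset.range k, φ (T^[i + j] x))|)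
      ≤ (k:ℝ)⁻¹ * ((K:ℝ)⁻¹ * (K * (2 * K * c))) := by
        gcongr
    _ = 2 * K * c / k := by field_simp

end Aux
section Garsia
variable {X : Type*} [MeasurableSpace X] {μ : Measure X} [IsProbabilityMeasure μ]
  {T : X → X}

/-- Running maximum of the Birkhoff sums `S₁, ..., S_{N+1}`. -/
def runMax (φ : X → ℝ) (T : X → X) : ℕ → X → ℝ
  | 0, x => birkhoffSum T φ 1 x
  | (N+1), x => max (runMax φ T N x) (birkhoffSum T φ (N+2) x)

lemma meas_runMax (hT : Measurable T) {φ : X → ℝ} (hφ : Measurable φ) (N : ℕ) :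
    Measurable (runMax φ T N) := by
  induction N with
  | zero => exact meas_birkhoffSum hT hφ 1
  | succ N ih => exact ih.max (meas_birkhoffSum hT hφ (N+2))

lemma le_runMax (φ : X → ℝ) (T : X → X) {n N : ℕ} (h : n ≤ N) (x : X) :
    birkhoffSum T φ (n+1) x ≤ runMax φ T N x := by
  induction N with
  | zero => simp only [Nat.le_zero] at h; subst h; exact le_refl _
  | succ N ih =>
    rcases Nat.lt_or_ge n (N+1) with h' | h'
    · exact (ih (Nat.lt_succ_iff.mp h')).trans (le_max_left _ _)
    · have : n = N + 1 := le_antisymm h h'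
      subst this
      exact le_max_right _ _

lemma runMax_mono (φ : X → ℝ) (T : X → X) {N N' : ℕ} (h : N ≤ N') (x : X) :
    runMax φ T N x ≤ runMax φ T N' x := by
  induction N' with
  | zero => simp only [Nat.le_zero] at h; subst h; exact le_refl _
  | succ N' ih =>
    rcases Nat.lt_or_ge N (N'+1) with h' | h'
    · exact (ih (Nat.lt_succ_iff.mp h')).trans (le_max_left _ _)
    · have : N = N' + 1 := le_antisymm h h'
      subst this
      exact le_refl _

lemma abs_runMax_le {φ : X → ℝ} {c : ℝ} (hb : ∀ x, |φ x| ≤ c) (N : ℕ) (x : X) :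
    |runMax φ T N x| ≤ (N+1) * c := by
  induction N with
  | zero => simpa [runMax] using abs_birkhoffSum_le (T := T) hb 1 x
  | succ N ih =>
    have h1 : |birkhoffSum T φ (N+2) x| ≤ (N+2) * c := by
      simpa using abs_birkhoffSum_le hb (N+2) x
    have hc : 0 ≤ c := le_trans (abs_nonneg _) (hb x)
    refine (abs_max_le_max_abs_abs).trans ?_
    refine max_le (ih.trans ?_) (h1.trans ?_) <;> push_cast <;> nlinarith

lemma runMax_le_add (φ : X → ℝ) (T : X → X) (N : ℕ) (x : X) :
    runMax φ T N x ≤ φ x + max (runMax φ T N (T x)) 0 := by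
  induction N with
  | zero =>
    simp only [runMax, birkhoffSum_one]
    linarith [le_max_right (φ (T x)) (0:ℝ)]
  | succ N ih =>
    show max (runMax φ T N x) (birkhoffSum T φ (N+2) x) ≤ _
    refine max_le (ih.trans ?_) ?_
    · have h := runMax_mono φ T (Nat.le_succ N) (T x)
      have h' : max (runMax φ T N (T x)) 0 ≤ max (runMax φ T (N+1) (T x)) 0 :=
        max_le_max h le_rfl
      linarith
    · rw [show N + 2 = (N+1) + 1 from rfl, birkhoffSum_succ']
      have h2 : birkhoffSum T φ (N+1) (T x) ≤ runMax φ T (N+1) (T x) :=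
        le_runMax φ T (Nat.le_succ N) (T x)
      have h3 : runMax φ T (N+1) (T x) ≤ max (runMax φ T (N+1) (T x)) 0 := le_max_left _ _
      linarith

/-- Garsia's maximal ergodic lemma. -/
lemma garsia_s5 (hT : MeasurePreserving T μ μ) {φ : X → ℝ} (hφ : Measurable φ) {c : ℝ}
    (hb : ∀ x, |φ x| ≤ c) (N : ℕ) :
    0 ≤ ∫ x in {x | 0 < runMax φ T N x}, φ x ∂μ := by
  set P : X → ℝ := fun x => max (runMax φ T N x) 0 with hP
  have hPmeas : Measurable P := (meas_runMax hT.measurable hφ N).max measurable_const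
  have hPb : ∀ x, |P x| ≤ ((N:ℝ)+1) * c := by
    intro x
    have h1 := abs_runMax_le (T := T) hb N x
    have h0 : (0:ℝ) ≤ ((N:ℝ)+1) * c := le_trans (abs_nonneg _) h1
    exact abs_max_le_max_abs_abs.trans (max_le h1 (by simpa using h0))
  have hPint : Integrable P μ := integrable_of_bdd hPmeas.aestronglyMeasurable hPb
  have hPTint : Integrable (fun x => P (T x)) μ :=
    integrable_of_bdd (hPmeas.comp hT.measurable).aestronglyMeasurable (fun x => hPb (T x))
  have hφint : Integrable φ μ := integrable_of_bdd hφ.aestronglyMeasurable hb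
  have hEmeas : MeasurableSet {x | 0 < runMax φ T N x} :=
    measurableSet_lt measurable_const (meas_runMax hT.measurable hφ N)
  have hptwise : ∀ x, P x - P (T x) ≤ ({x | 0 < runMax φ T N x}).indicator φ x := by
    intro x
    by_cases hx : 0 < runMax φ T N x
    · rw [Set.indicator_of_mem (show x ∈ {x | 0 < runMax φ T N x} from hx)]
      have : P x = runMax φ T N x := max_eq_left hx.le
      rw [this]
      have := runMax_le_add φ T N x
      linarith
    · rw [Set.indicator_of_notMem (show x ∉ {x | 0 < runMax φ T N x} from hx)]
      have : P x = 0 := max_eq_right (not_lt.mp hx)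
      rw [this]
      have : 0 ≤ P (T x) := le_max_right _ _
      linarith
  have hTP : ∫ x, P (T x) ∂μ = ∫ x, P x ∂μ := by
    have h := integral_map (μ := μ) hT.measurable.aemeasurable
      (f := P) (by rw [hT.map_eq]; exact hPmeas.aestronglyMeasurable)
    rw [hT.map_eq] at h
    exact h.symm
  have h0 : ∫ x, (P x - P (T x)) ∂μ = 0 := by
    rw [integral_sub hPint hPTint, hTP, sub_self]
  calc (0:ℝ) = ∫ x, (P x - P (T x)) ∂μ := h0.symm
    _ ≤ ∫ x, ({x | 0 < runMax φ T N x}).indicator φ x ∂μ :=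
        integral_mono (hPint.sub hPTint) (hφint.indicator hEmeas) hptwise
    _ = ∫ x in {x | 0 < runMax φ T N x}, φ x ∂μ := integral_indicator hEmeas

end Garsia
section WeakMax
variable {X : Type*} [MeasurableSpace X] {μ : Measure X} [IsProbabilityMeasure μ]
  {T : X → X}

lemma exists_pos_of_runMax_pos {φ : X → ℝ} {N : ℕ} {x : X} (h : 0 < runMax φ T N x) :
    ∃ n : ℕ, 0 < birkhoffSum T φ (n+1) x := by
  induction N with
  | zero => exact ⟨0, h⟩
  | succ N ih =>
    rcases lt_max_iff.mp h with h' | h'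
    · exact ih h'
    · exact ⟨N+1, h'⟩

lemma abs_birkhoffAverage_le_abs (g : X → ℝ) (n : ℕ) (x : X) :
    |birkhoffAverage ℝ T g n x| ≤ birkhoffAverage ℝ T (fun y => |g y|) n x := by
  rw [birkhoffAverage, birkhoffAverage, smul_eq_mul, smul_eq_mul, abs_mul, abs_inv, Nat.abs_cast]
  gcongr
  exact Finset.abs_sum_le_sum_abs _ _

lemma weak_max_erg (hT : MeasurePreserving T μ μ) {g : X → ℝ} (hg : Measurable g) {c : ℝ}
    (hb : ∀ x, |g x| ≤ c) {lam : ℝ} (hlam : 0 < lam) :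
    μ {x | ∃ n : ℕ, lam < birkhoffAverage ℝ T (fun y => |g y|) (n+1) x}
      ≤ ENNReal.ofReal (lam⁻¹ * ∫ x, |g x| ∂μ) := by
  set φ : X → ℝ := fun y => |g y| - lam with hφdef
  have hφm : Measurable φ := hg.abs.sub measurable_const
  have hφb : ∀ x, |φ x| ≤ c + lam := by
    intro x
    have h1 := hb x
    have h2 := abs_nonneg (g x)
    exact abs_le.mpr ⟨by simp only [hφdef]; linarith, by simp only [hφdef]; linarith⟩
  have hbs : ∀ (n : ℕ) (x : X), birkhoffSum T φ n x
      = birkhoffSum T (fun y => |g y|) n x - n * lam := by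
    intro n x
    simp [birkhoffSum, hφdef, Finset.sum_sub_distrib, mul_comm]
  have hset : {x | ∃ n : ℕ, lam < birkhoffAverage ℝ T (fun y => |g y|) (n+1) x}
      = ⋃ N, {x | 0 < runMax φ T N x} := by
    ext x
    simp only [Set.mem_setOf_eq, Set.mem_iUnion]
    constructor
    · rintro ⟨n, hn⟩
      refine ⟨n, lt_of_lt_of_le ?_ (le_runMax φ T le_rfl x)⟩
      rw [hbs]
      rw [birkhoffAverage, smul_eq_mul] at hn
      have hpos : (0:ℝ) < ((n:ℝ)+1) := by positivity
      have hcast : ((n+1 : ℕ) : ℝ) = (n:ℝ)+1 := by push_cast; ring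
      rw [hcast] at hn
      have h' := (mul_lt_mul_iff_right₀ hpos).mpr hn
      rw [← mul_assoc, mul_inv_cancel₀ (ne_of_gt hpos), one_mul] at h'
      rw [hcast]
      linarith
    · rintro ⟨N, hN⟩
      obtain ⟨n, hn⟩ := exists_pos_of_runMax_pos hN
      refine ⟨n, ?_⟩
      rw [hbs] at hn
      rw [birkhoffAverage, smul_eq_mul]
      have hpos : (0:ℝ) < ((n:ℝ)+1) := by positivity
      have hcast : ((n+1 : ℕ) : ℝ) = (n:ℝ)+1 := by push_cast; ring
      rw [hcast] at hn ⊢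
      rw [lt_inv_mul_iff₀ hpos]
      linarith
  rw [hset]
  have hmono : Monotone (fun N => {x : X | 0 < runMax φ T N x}) := fun a b hab x hx =>
    lt_of_lt_of_le hx (runMax_mono φ T hab x)
  rw [hmono.measure_iUnion]
  refine iSup_le fun N => ?_
  set E := {x | 0 < runMax φ T N x} with hE
  have hgint : Integrable (fun x => |g x|) μ :=
    integrable_of_bdd hg.abs.aestronglyMeasurable (fun x => by simpa using hb x)
  have h1 : 0 ≤ ∫ x in E, φ x ∂μ := garsia_s5 hT hφm hφb N
  have h2 : ∫ x in E, φ x ∂μ = (∫ x in E, |g x| ∂μ) - lam * (μ E).toReal := by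
    have : ∫ x in E, φ x ∂μ = (∫ x in E, |g x| ∂μ) - ∫ _x in E, lam ∂μ :=
      integral_sub hgint.integrableOn (integrable_const lam).integrableOn
    rw [this, setIntegral_const, smul_eq_mul, mul_comm]
    exact rfl
  have h3 : ∫ x in E, |g x| ∂μ ≤ ∫ x, |g x| ∂μ :=
    setIntegral_le_integral hgint (Filter.Eventually.of_forall fun x => abs_nonneg _)
  have h4 : lam * (μ E).toReal ≤ ∫ x, |g x| ∂μ := by linarith
  have hnn : (0:ℝ) ≤ lam⁻¹ * ∫ x, |g x| ∂μ :=
    mul_nonneg (inv_nonneg.mpr hlam.le) (integral_nonneg fun x => abs_nonneg _)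
  rw [ENNReal.le_ofReal_iff_toReal_le (measure_ne_top μ _) hnn, le_inv_mul_iff₀ hlam]
  exact h4

end WeakMax
section MeanErg
variable {X : Type*} [MeasurableSpace X] {μ : Measure X} [IsProbabilityMeasure μ]
  {T : X → X}

/-- The Koopman operator on `L²`. -/
def koopman (hT : MeasurePreserving T μ μ) : Lp ℝ 2 μ →L[ℝ] Lp ℝ 2 μ :=
  LinearMap.mkContinuous
    { toFun := Lp.compMeasurePreserving T hT
      map_add' := fun g h => map_add _ g h
      map_smul' := fun c g => Lp.ext (by
        have h1 := Lp.coeFn_compMeasurePreserving (c • g) hT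
        have h2 := Lp.coeFn_compMeasurePreserving g hT
        have e2 : ((⇑(c • g)) ∘ T : X → ℝ) =ᵐ[μ] (fun x => c • (g : X → ℝ) (T x)) :=
          hT.quasiMeasurePreserving.ae_eq_comp (Lp.coeFn_smul c g)
        have e3 : (⇑(c • Lp.compMeasurePreserving T hT g) : X → ℝ)
            =ᵐ[μ] fun x => c • (Lp.compMeasurePreserving T hT g : X → ℝ) x :=
          Lp.coeFn_smul _ _
        have e4 : (fun x => c • (Lp.compMeasurePreserving T hT g : X → ℝ) x)
            =ᵐ[μ] fun x => c • (g : X → ℝ) (T x) := h2.mono fun x hx => by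
              simp only [hx]; rfl
        exact (h1.trans e2).trans ((e3.trans e4).symm)) }
    1 (fun g => by
      rw [one_mul]
      exact le_of_eq (Lp.norm_compMeasurePreserving g hT))

lemma koopman_apply (hT : MeasurePreserving T μ μ) (G : Lp ℝ 2 μ) :
    koopman hT G = Lp.compMeasurePreserving T hT G := rfl

lemma koopman_norm_le (hT : MeasurePreserving T μ μ) : ‖(koopman hT : Lp ℝ 2 μ →L[ℝ] Lp ℝ 2 μ)‖ ≤ 1 :=
  LinearMap.mkContinuous_norm_le _ zero_le_one _

lemma koopman_iter_apply (hT : MeasurePreserving T μ μ) {F : Lp ℝ 2 μ} {f : X → ℝ}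
    (hF : (F : X → ℝ) =ᵐ[μ] f) (n : ℕ) :
    ((⇑(koopman hT))^[n] F : X → ℝ) =ᵐ[μ] fun x => f (T^[n] x) := by
  induction n with
  | zero => simpa using hF
  | succ n ih =>
    rw [Function.iterate_succ_apply']
    have h1 : (⇑(koopman hT ((⇑(koopman hT))^[n] F)) : X → ℝ)
        =ᵐ[μ] (⇑((⇑(koopman hT))^[n] F) : X → ℝ) ∘ T :=
      Lp.coeFn_compMeasurePreserving _ hT
    have h2 : ((⇑((⇑(koopman hT))^[n] F) : X → ℝ) ∘ T)
        =ᵐ[μ] (fun x => f (T^[n] x)) ∘ T :=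
      hT.quasiMeasurePreserving.ae_eq_comp ih
    have h3 : ((fun x => f (T^[n] x)) ∘ T) = fun x => f (T^[n+1] x) :=
      funext fun x => congrArg f (Function.iterate_succ_apply T n x).symm
    exact h1.trans (h2.trans (by rw [h3]))

lemma birkhoffSum_koopman_coeFn (hT : MeasurePreserving T μ μ) {F : Lp ℝ 2 μ} {f : X → ℝ}
    (hF : (F : X → ℝ) =ᵐ[μ] f) (n : ℕ) :
    ((birkhoffSum (⇑(koopman hT)) _root_.id n F : Lp ℝ 2 μ) : X → ℝ)
      =ᵐ[μ] birkhoffSum T f n := by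
  induction n with
  | zero =>
    rw [birkhoffSum_zero, birkhoffSum_zero']
    exact Lp.coeFn_zero _ _ _
  | succ n ih =>
    rw [birkhoffSum_succ]
    have h1 := Lp.coeFn_add (birkhoffSum (⇑(koopman hT)) _root_.id n F)
      (_root_.id ((⇑(koopman hT))^[n] F))
    refine h1.trans ?_
    have h2 := koopman_iter_apply hT hF n
    filter_upwards [ih, h2] with x hx1 hx2
    have : birkhoffSum T f (n+1) x = birkhoffSum T f n x + f (T^[n] x) :=
      birkhoffSum_succ T f n x
    simp only [Pi.add_apply, _root_.id, hx1, hx2, this]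

lemma birkhoffAverage_koopman_coeFn (hT : MeasurePreserving T μ μ) {F : Lp ℝ 2 μ} {f : X → ℝ}
    (hF : (F : X → ℝ) =ᵐ[μ] f) (n : ℕ) :
    ((birkhoffAverage ℝ (⇑(koopman hT)) _root_.id n F : Lp ℝ 2 μ) : X → ℝ)
      =ᵐ[μ] birkhoffAverage ℝ T f n := by
  have h1 := Lp.coeFn_smul ((n:ℝ)⁻¹) (birkhoffSum (⇑(koopman hT)) _root_.id n F)
  refine h1.trans ?_
  filter_upwards [birkhoffSum_koopman_coeFn hT hF n] with x hx
  simp only [Pi.smul_apply, hx]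
  rfl

end MeanErg
section MeanErg2
variable {X : Type*} [MeasurableSpace X] {μ : Measure X} [IsProbabilityMeasure μ]
  {T : X → X}

lemma invSigma_le (T : X → X) : invSigma T ≤ ‹MeasurableSpace X› := fun _s hs => hs.1

/-- Any Koopman-fixed vector is orthogonal to a function with zero conditional
expectation on the invariant σ-algebra. -/
lemma fixed_orthogonal (hT : MeasurePreserving T μ μ) {f : X → ℝ} (hfm : Measurable f) {c : ℝ}
    (hb : ∀ x, |f x| ≤ c) (hf0 : μ[f | invSigma T] =ᵐ[μ] 0)
    {F : Lp ℝ 2 μ} (hF : (F : X → ℝ) =ᵐ[μ] f)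
    (G : Lp ℝ 2 μ) (hGfix : koopman hT G = G) :
    (inner ℝ G F : ℝ) = 0 := by
  classical
  have hGae : AEMeasurable (⇑G) μ := (Lp.aestronglyMeasurable G).aemeasurable
  set g₀ : X → ℝ := hGae.mk _ with hg₀def
  have hg₀meas : Measurable g₀ := hGae.measurable_mk
  have hg₀eq : (⇑G : X → ℝ) =ᵐ[μ] g₀ := hGae.ae_eq_mk
  have hinv0 : (⇑G : X → ℝ) ∘ T =ᵐ[μ] ⇑G := by
    have h1 : (⇑(koopman hT G) : X → ℝ) =ᵐ[μ] (⇑G : X → ℝ) ∘ T :=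
      Lp.coeFn_compMeasurePreserving G hT
    rw [hGfix] at h1
    exact h1.symm
  have hg₀inv : (g₀ ∘ T : X → ℝ) =ᵐ[μ] g₀ :=
    ((hT.quasiMeasurePreserving.ae_eq_comp hg₀eq).symm.trans hinv0).trans hg₀eq
  have hg₀n : ∀ n : ℕ, (fun x => g₀ (T^[n] x)) =ᵐ[μ] g₀ := by
    intro n
    induction n with
    | zero => simp
    | succ n ih =>
      have h1 : (fun x => g₀ (T^[n+1] x)) = (fun x => g₀ (T^[n] x)) ∘ T :=
        funext fun x => congrArg g₀ (Function.iterate_succ_apply T n x)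
      rw [h1]
      exact (hT.quasiMeasurePreserving.ae_eq_comp ih).trans hg₀inv
  set gt : X → ℝ := fun x => Filter.limsup (fun n => g₀ (T^[n] x)) Filter.atTop with hgtdef
  have hgtT : ∀ x, gt (T x) = gt x := by
    intro x
    have h1 : (fun n => g₀ (T^[n] (T x))) = fun n => g₀ (T^[n+1] x) :=
      funext fun n => congrArg g₀ (Function.iterate_succ_apply T n x).symm
    simp only [hgtdef, h1]
    exact Filter.limsup_nat_add (fun n => g₀ (T^[n] x)) 1
  have hgtmeas : Measurable gt :=
    Measurable.limsup fun i => hg₀meas.comp (hT.measurable.iterate i)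
  have hgteq : gt =ᵐ[μ] g₀ := by
    have hall : ∀ᵐ x ∂μ, ∀ n : ℕ, g₀ (T^[n] x) = g₀ x := ae_all_iff.mpr hg₀n
    filter_upwards [hall] with x hx
    have h1 : (fun n => g₀ (T^[n] x)) = fun _ => g₀ x := funext hx
    simp only [hgtdef, h1]
    exact Filter.limsup_const _
  have hgtsm : StronglyMeasurable[invSigma T] gt := by
    have hmeas : Measurable[invSigma T] gt := by
      intro s hs
      refine ⟨hgtmeas hs, ?_⟩
      have h1 : gt ∘ T = gt := funext hgtT
      calc T ⁻¹' (gt ⁻¹' s) = (gt ∘ T) ⁻¹' s := rfl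
        _ = gt ⁻¹' s := by rw [h1]
    exact hmeas.stronglyMeasurable
  have hGint : Integrable (⇑G) μ := (Lp.memLp G).integrable one_le_two
  have hGgt : (⇑G : X → ℝ) =ᵐ[μ] gt := hg₀eq.trans hgteq.symm
  have hgtint : Integrable gt μ := hGint.congr hGgt
  have hfint : Integrable f μ := integrable_of_bdd hfm.aestronglyMeasurable hb
  have hprod : Integrable (gt * f) μ := by
    have h1 : Integrable (fun x => f x * gt x) μ :=
      hgtint.bdd_mul hfm.aestronglyMeasurable
        (Filter.Eventually.of_forall fun x => by simpa [Real.norm_eq_abs] using hb x)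
    exact h1.congr (Filter.Eventually.of_forall fun x => mul_comm _ _)
  have hm := invSigma_le (X := X) T
  haveI : IsFiniteMeasure (μ.trim hm) := isFiniteMeasure_trim hm
  have hpull : μ[gt * f | invSigma T] =ᵐ[μ] gt * μ[f | invSigma T] :=
    condExp_mul_of_stronglyMeasurable_left hgtsm hprod hfint
  have hzero : ∫ x, gt x * f x ∂μ = 0 := by
    have h1 : ∫ x, (gt * f) x ∂μ = ∫ x, (μ[gt * f | invSigma T]) x ∂μ :=
      (integral_condExp hm).symm
    have h2 : ∫ x, (μ[gt * f | invSigma T]) x ∂μ = ∫ x, (gt * μ[f | invSigma T]) x ∂μ :=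
      integral_congr_ae hpull
    have h3 : ∫ x, (gt * μ[f | invSigma T]) x ∂μ = ∫ x, (0:ℝ) ∂μ := by
      refine integral_congr_ae ?_
      filter_upwards [hf0] with x hx
      simp [hx]
    simpa using h1.trans (h2.trans h3)
  rw [MeasureTheory.L2.inner_def]
  have h4 : ∫ x, (inner ℝ (G x) (F x) : ℝ) ∂μ = ∫ x, gt x * f x ∂μ := by
    refine integral_congr_ae ?_
    filter_upwards [hGgt, hF] with x hx1 hx2
    simp [hx1, hx2, RCLike.inner_apply, starRingEnd_apply]
    ring
  rw [h4, hzero]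

set_option synthInstance.maxHeartbeats 1000000 in
/-- Mean ergodic theorem, `L¹` smallness form. -/
lemma mean_ergodic_small (hT : MeasurePreserving T μ μ) {f : X → ℝ} (hfm : Measurable f) {c : ℝ}
    (hb : ∀ x, |f x| ≤ c) (hf0 : μ[f | invSigma T] =ᵐ[μ] 0) {η : ℝ} (hη : 0 < η) :
    ∃ K : ℕ, 1 ≤ K ∧ ∫⁻ x, ‖birkhoffAverage ℝ T f K x‖₊ ∂μ < ENNReal.ofReal η := by
  have hf2 : MemLp f 2 μ :=
    (memLp_top_of_bound hfm.aestronglyMeasurable c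
      (Filter.Eventually.of_forall fun x => by simpa [Real.norm_eq_abs] using hb x)
      ).mono_exponent le_top
  set F : Lp ℝ 2 μ := hf2.toLp f with hFdef
  have hF : (F : X → ℝ) =ᵐ[μ] f := hf2.coeFn_toLp
  have hperp : F ∈ ((koopman hT).eqLocus (1 : Lp ℝ 2 μ →L[ℝ] Lp ℝ 2 μ))ᗮ := by
    rw [Submodule.mem_orthogonal]
    intro G hG
    have hGfix : koopman hT G = G := by
      have := LinearMap.mem_eqLocus.mp hG
      simpa using this
    exact fixed_orthogonal hT hfm hb hf0 hF G hGfix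
  have htend := (koopman hT).tendsto_birkhoffAverage_orthogonalProjection
    (koopman_norm_le hT) F
  have hproj : Submodule.orthogonalProjectionOnto ((koopman hT).eqLocus
      (1 : Lp ℝ 2 μ →L[ℝ] Lp ℝ 2 μ)) F = 0 := Submodule.orthogonalProjectionOnto_eq_zero_iff.mpr hperp
  rw [hproj] at htend
  have htendnorm : Filter.Tendsto (fun k => ‖birkhoffAverage ℝ (⇑(koopman hT)) _root_.id k F‖)
      Filter.atTop (nhds 0) := by
    have := htend.norm
    simpa using this
  obtain ⟨K, hK⟩ := ((htendnorm.eventually (gt_mem_nhds hη)).and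
    (Filter.eventually_ge_atTop 1)).exists
  refine ⟨K, hK.2, ?_⟩
  have hch : ∫⁻ x, ‖birkhoffAverage ℝ T f K x‖₊ ∂μ
      ≤ eLpNorm (birkhoffAverage ℝ T f K) 2 μ := by
    change ∫⁻ x, ‖birkhoffAverage ℝ T f K x‖ₑ ∂μ ≤ _
    rw [← eLpNorm_one_eq_lintegral_enorm]
    exact eLpNorm_le_eLpNorm_of_exponent_le one_le_two
      (meas_birkhoffAverage hT.measurable hfm K).aestronglyMeasurable
  have heq : eLpNorm (birkhoffAverage ℝ T f K) 2 μ
      = ENNReal.ofReal ‖birkhoffAverage ℝ (⇑(koopman hT)) _root_.id K F‖ := by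
    rw [← eLpNorm_congr_ae (birkhoffAverage_koopman_coeFn hT hF K)]
    rw [MeasureTheory.Lp.norm_def, ENNReal.ofReal_toReal (Lp.eLpNorm_ne_top _)]
  refine lt_of_le_of_lt (hch.trans_eq heq) ?_
  exact (ENNReal.ofReal_lt_ofReal_iff hη).mpr hK.1

end MeanErg2
/-- The (centered) Hardy–Littlewood property: the centered maximal operator is of
weak type (1,1). -/
def HLProp {X : Type*} [PseudoMetricSpace X] [MeasurableSpace X] (μ : Measure X) : Prop :=
  ∃ C : ℝ≥0∞, 1 ≤ C ∧ ∀ f : X → ℝ, Integrable f μ → ∀ ε : ℝ≥0∞, 0 < ε →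
    μ {x | ε ≤ ⨆ (r : ℝ) (_ : 0 < r),
        (μ (ball x r))⁻¹ * ∫⁻ y in ball x r, ‖f y‖₊ ∂μ}
      ≤ C / ε * ∫⁻ y, ‖f y‖₊ ∂μ

theorem stmt5 {X : Type*} [MetricSpace X] [MeasurableSpace X] [BorelSpace X]
    (μ : Measure X) [IsProbabilityMeasure μ] (hHL : HLProp μ)
    (hball : ∀ (x : X) (r : ℝ), 0 < r → 0 < μ (ball x r))
    (T : X → X) (hT : MeasurePreserving T μ μ)
    (f : X → ℝ) (hf : MemLp f ⊤ μ) (hf0 : μ[f | invSigma T] =ᵐ[μ] 0) :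
    ∀ᵐ x ∂μ, ∀ ε > (0:ℝ), ∃ r₀ > (0:ℝ), ∃ K : ℕ, ∀ r, 0 < r → r < r₀ → ∀ k ≥ K,
      |(μ (ball x r)).toReal⁻¹ *
          ∫ y in ball x r, (k:ℝ)⁻¹ * ∑ j ∈ Finset.range k, f (T^[j] y) ∂μ| < ε := by
  classical
  -- Step 1: a bounded measurable representative of `f`.
  set c : ℝ := max (eLpNormEssSup f μ).toReal 1 with hc_def
  have hc1 : (1:ℝ) ≤ c := le_max_right _ _
  have hc0 : (0:ℝ) ≤ c := zero_le_one.trans hc1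
  have hfaebd : ∀ᵐ y ∂μ, |f y| ≤ c := by
    have h1 : ∀ᵐ y ∂μ, (‖f y‖₊ : ℝ≥0∞) ≤ eLpNormEssSup f μ := ae_le_eLpNormEssSup
    have h2 : eLpNormEssSup f μ ≠ ∞ := by
      have := hf.2
      rwa [eLpNorm_exponent_top, lt_top_iff_ne_top] at this
    filter_upwards [h1] with y hy
    have h3 : ‖f y‖ ≤ (eLpNormEssSup f μ).toReal := by
      have := ENNReal.toReal_mono h2 hy
      simpa using this
    calc |f y| = ‖f y‖ := (Real.norm_eq_abs _).symm
      _ ≤ (eLpNormEssSup f μ).toReal := h3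
      _ ≤ c := le_max_left _ _
  set f₁ : X → ℝ := hf.1.mk f with hf₁_def
  have hf₁meas : Measurable f₁ := hf.1.stronglyMeasurable_mk.measurable
  have hf₁ae : f =ᵐ[μ] f₁ := hf.1.ae_eq_mk
  set fb : X → ℝ := fun x => if |f₁ x| ≤ c then f₁ x else 0 with hfb_def
  have hfbmeas : Measurable fb :=
    Measurable.ite (measurableSet_le hf₁meas.abs measurable_const) hf₁meas measurable_const
  have hfbb : ∀ x, |fb x| ≤ c := by
    intro x
    by_cases hx : |f₁ x| ≤ c
    · simpa [hfb_def, hx] using hx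
    · simp [hfb_def, hx, hc0]
  have hfbae : fb =ᵐ[μ] f := by
    filter_upwards [hf₁ae, hfaebd] with y h1 h2
    have h3 : |f₁ y| ≤ c := by rw [← h1]; exact h2
    simp [hfb_def, h3, h1]
  have hfb0 : μ[fb | invSigma T] =ᵐ[μ] 0 := (condExp_congr_ae hfbae).trans hf0
  -- Step 2: choose averaging times `K n` via the mean ergodic theorem.
  set lam : ℕ → ℝ := fun n => (4:ℝ)⁻¹^n / 2 with hlam_def
  have hlampos : ∀ n, 0 < lam n := by intro n; positivity
  have hKex : ∀ n : ℕ, ∃ K : ℕ, 1 ≤ K ∧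
      ∫⁻ x, ‖birkhoffAverage ℝ T fb K x‖₊ ∂μ < ENNReal.ofReal ((lam n)^2 / c) := by
    intro n
    refine mean_ergodic_small hT hfbmeas hfbb hfb0 ?_
    have := hlampos n
    positivity
  choose K hK1 hKsmall using hKex
  set g : ℕ → X → ℝ := fun n => birkhoffAverage ℝ T fb (K n) with hg_def
  have hgmeas : ∀ n, Measurable (g n) := fun n => meas_birkhoffAverage hT.measurable hfbmeas _
  have hgb : ∀ n x, |g n x| ≤ c := fun n x => abs_birkhoffAverage_le hc0 hfbb _ x
  set Gs : ℕ → X → ℝ≥0∞ := fun n x => ⨆ k, ENNReal.ofReal |birkhoffAverage ℝ T (g n) (k+1) x|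
    with hGs_def
  have hGsmeas : ∀ n, Measurable (Gs n) := fun n =>
    Measurable.iSup fun k =>
      ENNReal.measurable_ofReal.comp (meas_birkhoffAverage hT.measurable (hgmeas n) (k+1)).abs
  have hGsb : ∀ n x, Gs n x ≤ ENNReal.ofReal c := fun n x =>
    iSup_le fun k => ENNReal.ofReal_le_ofReal (abs_birkhoffAverage_le hc0 (hgb n) _ x)
  have hgint : ∀ n, ∫ x, |g n x| ∂μ ≤ (lam n)^2 / c := by
    intro n
    have h1 : ∫ x, |g n x| ∂μ = (∫⁻ x, ‖g n x‖₊ ∂μ).toReal := by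
      change _ = (∫⁻ x, ‖g n x‖ₑ ∂μ).toReal
      rw [← integral_norm_eq_lintegral_enorm (hgmeas n).aestronglyMeasurable]
      simp [Real.norm_eq_abs]
    rw [h1]
    refine ENNReal.toReal_le_of_le_ofReal ?_ (hKsmall n).le
    have := hlampos n
    positivity
  have hGsweak : ∀ n, μ {x | ENNReal.ofReal (lam n) < Gs n x} ≤ ENNReal.ofReal (lam n / c) := by
    intro n
    have hsub : {x | ENNReal.ofReal (lam n) < Gs n x}
        ⊆ {x | ∃ m : ℕ, lam n < birkhoffAverage ℝ T (fun y => |g n y|) (m+1) x} := by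
      intro x hx
      have hx' : ENNReal.ofReal (lam n)
          < ⨆ k, ENNReal.ofReal |birkhoffAverage ℝ T (g n) (k+1) x| := hx
      obtain ⟨k, hk⟩ := lt_iSup_iff.mp hx'
      exact ⟨k, lt_of_lt_of_le (ENNReal.ofReal_lt_ofReal_iff'.mp hk).1
        (abs_birkhoffAverage_le_abs _ _ _)⟩
    refine le_trans (measure_mono hsub) ?_
    refine le_trans (weak_max_erg hT (hgmeas n) (hgb n) (hlampos n)) ?_
    refine ENNReal.ofReal_le_ofReal ?_
    have h2 := hgint n
    have hinv : (0:ℝ) ≤ (lam n)⁻¹ := inv_nonneg.mpr (hlampos n).le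
    have hlc : (lam n)⁻¹ * ((lam n)^2 / c) = lam n / c := by
      field_simp
    calc (lam n)⁻¹ * ∫ x, |g n x| ∂μ ≤ (lam n)⁻¹ * ((lam n)^2 / c) := by gcongr
      _ = lam n / c := hlc
  have hGsint : ∀ n, ∫⁻ x, Gs n x ∂μ ≤ ENNReal.ofReal ((4:ℝ)⁻¹^n) := by
    intro n
    set s := {x | ENNReal.ofReal (lam n) < Gs n x} with hs_def
    have hmeasset : MeasurableSet s := measurableSet_lt measurable_const (hGsmeas n)
    have hptw : ∀ x, Gs n x ≤ ENNReal.ofReal (lam n)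
        + Set.indicator s (fun _ => ENNReal.ofReal c) x := by
      intro x
      by_cases hx : x ∈ s
      · rw [Set.indicator_of_mem hx]
        exact le_add_left (hGsb n x)
      · rw [Set.indicator_of_notMem hx, add_zero]
        exact not_lt.mp hx
    calc ∫⁻ x, Gs n x ∂μ
        ≤ ∫⁻ x, (ENNReal.ofReal (lam n) + Set.indicator s (fun _ => ENNReal.ofReal c) x) ∂μ :=
          lintegral_mono hptw
      _ = ENNReal.ofReal (lam n) + ENNReal.ofReal c * μ s := by
          rw [lintegral_add_left measurable_const, lintegral_const,
            lintegral_indicator_const hmeasset]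
          simp
      _ ≤ ENNReal.ofReal (lam n) + ENNReal.ofReal c * ENNReal.ofReal (lam n / c) := by
          gcongr
          exact hGsweak n
      _ = ENNReal.ofReal (lam n) + ENNReal.ofReal (lam n) := by
          rw [← ENNReal.ofReal_mul hc0]
          congr 1
          field_simp
      _ = ENNReal.ofReal ((4:ℝ)⁻¹^n) := by
          rw [← ENNReal.ofReal_add (hlampos n).le (hlampos n).le]
          congr 1
          rw [hlam_def]
          ring
  -- Step 3: the dominating function `H`.
  set H : X → ℝ≥0∞ := fun x => ∑' n : ℕ, (2:ℝ≥0∞)^n * Gs n x with hH_def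
  have hHmeas : Measurable H := Measurable.ennreal_tsum fun n => (hGsmeas n).const_mul _
  have hHint : ∫⁻ x, H x ∂μ ≤ 2 := by
    rw [hH_def]
    rw [lintegral_tsum fun n => ((hGsmeas n).const_mul _).aemeasurable]
    have hterm : ∀ n : ℕ, ∫⁻ x, (2:ℝ≥0∞)^n * Gs n x ∂μ ≤ (2⁻¹ : ℝ≥0∞)^n := by
      intro n
      rw [lintegral_const_mul _ (hGsmeas n)]
      calc (2:ℝ≥0∞)^n * ∫⁻ x, Gs n x ∂μ ≤ (2:ℝ≥0∞)^n * ENNReal.ofReal ((4:ℝ)⁻¹^n) := by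
            gcongr
            exact hGsint n
        _ = (2⁻¹ : ℝ≥0∞)^n := by
            rw [ENNReal.ofReal_pow (by norm_num), ← mul_pow]
            congr 1
            rw [show ((4:ℝ)⁻¹) = ((4:ℝ))⁻¹ from rfl, ENNReal.ofReal_inv_of_pos (by norm_num)]
            rw [show ENNReal.ofReal (4:ℝ) = (4:ℝ≥0∞) by
              rw [show (4:ℝ) = ((4:ℕ):ℝ) by norm_num, ENNReal.ofReal_natCast]; norm_num]
            rw [show (4:ℝ≥0∞) = 2 * 2 by norm_num, ENNReal.mul_inv (by norm_num) (by norm_num)]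
            rw [← mul_assoc, ENNReal.mul_inv_cancel (by norm_num) (by norm_num), one_mul]
    calc ∑' n : ℕ, ∫⁻ x, (2:ℝ≥0∞)^n * Gs n x ∂μ ≤ ∑' n : ℕ, (2⁻¹ : ℝ≥0∞)^n :=
          ENNReal.tsum_le_tsum hterm
      _ = (1 - 2⁻¹)⁻¹ := ENNReal.tsum_geometric _
      _ = 2 := by rw [ENNReal.one_sub_inv_two]; simp
  have hHne : ∫⁻ x, H x ∂μ ≠ ∞ := (hHint.trans_lt (by norm_num)).ne
  have hHae : ∀ᵐ x ∂μ, H x < ∞ := ae_lt_top hHmeas hHne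
  have hρint : Integrable (fun x => (H x).toReal) μ :=
    integrable_toReal_of_lintegral_ne_top hHmeas.aemeasurable hHne
  -- Step 4: the maximal function of `H` is a.e. finite.
  obtain ⟨CHL, _hCHL1, hCHL⟩ := hHL
  set M : X → ℝ≥0∞ := fun x => ⨆ (r : ℝ) (_ : 0 < r),
      (μ (ball x r))⁻¹ * ∫⁻ y in ball x r, H y ∂μ with hM_def
  have hint_eq : ∀ (x : X) (r : ℝ),
      ∫⁻ y in ball x r, ‖(H y).toReal‖₊ ∂μ = ∫⁻ y in ball x r, H y ∂μ := by
    intro x r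
    refine lintegral_congr_ae (ae_restrict_of_ae ?_)
    filter_upwards [hHae] with y hy
    change ‖(H y).toReal‖ₑ = H y
    rw [Real.enorm_eq_ofReal ENNReal.toReal_nonneg, ENNReal.ofReal_toReal hy.ne]
  have hMnull : μ {x | (⊤:ℝ≥0∞) ≤ M x} = 0 := by
    have h1 := hCHL (fun x => (H x).toReal) hρint ⊤ (by norm_num)
    have h2 : {x | (⊤:ℝ≥0∞) ≤ M x} = {x | (⊤:ℝ≥0∞) ≤ ⨆ (r : ℝ) (_ : 0 < r),
        (μ (ball x r))⁻¹ * ∫⁻ y in ball x r, ‖(H y).toReal‖₊ ∂μ} := by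
      ext x
      simp only [Set.mem_setOf_eq, hM_def]
      constructor <;> intro hx <;>
        [ (refine le_trans hx (le_of_eq ?_); exact iSup_congr fun r =>
            iSup_congr fun _ => by rw [hint_eq x r]);
          (refine le_trans hx (le_of_eq ?_); exact iSup_congr fun r =>
            iSup_congr fun _ => by rw [hint_eq x r]) ]
    rw [h2]
    refine le_antisymm (le_trans h1 ?_) (zero_le)
    rw [ENNReal.div_top, zero_mul]
  have hMfin : ∀ᵐ x ∂μ, M x < ∞ := by
    rw [MeasureTheory.ae_iff]
    refine measure_mono_null (fun x hx => ?_) hMnull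
    exact not_lt.mp hx
  -- Step 5: the conclusion.
  filter_upwards [hMfin] with x hx
  intro ε hε
  refine ⟨1, one_pos, ?_⟩
  -- choose n with 2⁻ⁿ * M x < ofReal (ε/4)
  have h2n : Filter.Tendsto (fun n : ℕ => (2⁻¹:ℝ≥0∞)^n * M x) Filter.atTop (nhds 0) := by
    have h0 : Filter.Tendsto (fun n : ℕ => (2⁻¹:ℝ≥0∞)^n) Filter.atTop (nhds 0) :=
      ENNReal.tendsto_pow_atTop_nhds_zero_of_lt_one (ENNReal.inv_lt_one.mpr one_lt_two)
    simpa using ENNReal.Tendsto.mul_const h0 (Or.inr hx.ne)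
  obtain ⟨n, hn⟩ := (h2n.eventually (gt_mem_nhds (show (0:ℝ≥0∞) < ENNReal.ofReal (ε/4) from
    ENNReal.ofReal_pos.mpr (by linarith)))).exists
  refine ⟨Nat.ceil (8 * (K n) * c / ε) + 1, ?_⟩
  intro r hr _hr1 k hk
  have hk1 : 1 ≤ k := le_trans (Nat.le_add_left 1 _) hk
  have hkpos : (0:ℝ) < k := by exact_mod_cast hk1
  -- error term bound
  have herr : 2 * (K n) * c / k < ε / 4 := by
    have hceil : 8 * (K n) * c / ε ≤ (Nat.ceil (8 * (K n) * c / ε) : ℝ) := Nat.le_ceil _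
    have hklarge : 8 * (K n) * c / ε < (k:ℝ) := by
      have : (Nat.ceil (8 * (K n) * c / ε) : ℝ) + 1 ≤ (k:ℝ) := by exact_mod_cast hk
      linarith
    have hKnpos : (0:ℝ) < (K n : ℝ) := by exact_mod_cast (hK1 n)
    rw [div_lt_iff₀ hkpos]
    rw [div_lt_iff₀ hε] at hklarge
    nlinarith
  set B := ball x r with hB_def
  have hμB0 : 0 < μ B := hball x r hr
  have hμBtop : μ B ≠ ∞ := measure_ne_top μ B
  have hμBR : 0 < (μ B).toReal := ENNReal.toReal_pos hμB0.ne' hμBtop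
  -- identify the integrand with the Birkhoff average of fb
  have hstep0 : ∫ y in B, (k:ℝ)⁻¹ * ∑ j ∈ Finset.range k, f (T^[j] y) ∂μ
      = ∫ y in B, birkhoffAverage ℝ T fb k y ∂μ := by
    refine integral_congr_ae (ae_restrict_of_ae ?_)
    have hcomp : ∀ j : ℕ, (fun y => fb (T^[j] y)) =ᵐ[μ] fun y => f (T^[j] y) :=
      fun j => (hT.iterate j).quasiMeasurePreserving.ae_eq_comp hfbae
    filter_upwards [ae_all_iff.mpr hcomp] with y hy
    rw [birkhoffAverage, birkhoffSum, smul_eq_mul]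
    congr 1
    exact Finset.sum_congr rfl fun j _ => (hy j).symm
  -- pointwise domination
  have hptw : ∀ y, |birkhoffAverage ℝ T fb k y| ≤ (Gs n y).toReal + 2 * (K n) * c / k := by
    intro y
    have h1 : |birkhoffAverage ℝ T fb k y - birkhoffAverage ℝ T (g n) k y|
        ≤ 2 * (K n) * c / k := birkhoffAverage_avg_close hc0 hfbb (hK1 n) hk1 y
    have h2 : |birkhoffAverage ℝ T (g n) k y| ≤ (Gs n y).toReal := by
      have hk' : k = (k - 1) + 1 := (Nat.succ_pred_eq_of_pos hk1).symm
      have h3 : ENNReal.ofReal |birkhoffAverage ℝ T (g n) k y| ≤ Gs n y := by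
        rw [hk']
        exact le_iSup (fun m => ENNReal.ofReal |birkhoffAverage ℝ T (g n) (m+1) y|) (k-1)
      have h4 := ENNReal.toReal_mono (lt_of_le_of_lt (hGsb n y) ENNReal.ofReal_lt_top).ne h3
      rwa [ENNReal.toReal_ofReal (abs_nonneg _)] at h4
    calc |birkhoffAverage ℝ T fb k y|
        ≤ |birkhoffAverage ℝ T (g n) k y|
          + |birkhoffAverage ℝ T fb k y - birkhoffAverage ℝ T (g n) k y| := by
          have := abs_sub_abs_le_abs_sub (birkhoffAverage ℝ T fb k y)
            (birkhoffAverage ℝ T (g n) k y)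
          have h5 := abs_add_le (birkhoffAverage ℝ T (g n) k y)
            (birkhoffAverage ℝ T fb k y - birkhoffAverage ℝ T (g n) k y)
          calc |birkhoffAverage ℝ T fb k y|
              = |birkhoffAverage ℝ T (g n) k y
                + (birkhoffAverage ℝ T fb k y - birkhoffAverage ℝ T (g n) k y)| := by ring_nf
            _ ≤ _ := h5
      _ ≤ (Gs n y).toReal + 2 * (K n) * c / k := add_le_add h2 h1
  -- integrability on B
  have hABint : IntegrableOn (birkhoffAverage ℝ T fb k) B μ :=
    (integrable_of_bdd (meas_birkhoffAverage hT.measurable hfbmeas k).aestronglyMeasurable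
      (abs_birkhoffAverage_le hc0 hfbb k)).integrableOn
  have hGsTb : ∀ y, (Gs n y).toReal ≤ c := by
    intro y
    have := ENNReal.toReal_mono (show ENNReal.ofReal c ≠ ∞ from ENNReal.ofReal_ne_top)
      (hGsb n y)
    rwa [ENNReal.toReal_ofReal hc0] at this
  have hGsTint : IntegrableOn (fun y => (Gs n y).toReal) B μ := by
    refine Integrable.integrableOn (integrable_of_bdd
      (hGsmeas n).ennreal_toReal.aestronglyMeasurable (c := c) ?_)
    intro y
    rw [abs_of_nonneg ENNReal.toReal_nonneg]
    exact hGsTb y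
  have hGsRint : IntegrableOn (fun y => (Gs n y).toReal + 2 * (K n) * c / k) B μ :=
    hGsTint.add (integrable_const _).integrableOn
  -- main estimate
  have hstep1 : |∫ y in B, birkhoffAverage ℝ T fb k y ∂μ|
      ≤ (∫⁻ y in B, Gs n y ∂μ).toReal + (μ B).toReal * (2 * (K n) * c / k) := by
    have h1 : |∫ y in B, birkhoffAverage ℝ T fb k y ∂μ|
        ≤ ∫ y in B, |birkhoffAverage ℝ T fb k y| ∂μ := by
      rw [← Real.norm_eq_abs]
      exact (norm_integral_le_integral_norm _).trans (le_of_eq (by simp [Real.norm_eq_abs]))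
    have h2 : ∫ y in B, |birkhoffAverage ℝ T fb k y| ∂μ
        ≤ ∫ y in B, ((Gs n y).toReal + 2 * (K n) * c / k) ∂μ :=
      integral_mono hABint.abs hGsRint hptw
    have h3 : ∫ y in B, ((Gs n y).toReal + 2 * (K n) * c / k) ∂μ
        = (∫ y in B, (Gs n y).toReal ∂μ) + (μ B).toReal * (2 * (K n) * c / k) := by
      rw [integral_add hGsTint (integrable_const _).integrableOn, setIntegral_const,
        smul_eq_mul]
      exact rfl
    have h4 : ∫ y in B, (Gs n y).toReal ∂μ = (∫⁻ y in B, Gs n y ∂μ).toReal := by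
      refine integral_toReal ((hGsmeas n).aemeasurable.restrict) ?_
      exact Filter.Eventually.of_forall fun y =>
        lt_of_le_of_lt (hGsb n y) ENNReal.ofReal_lt_top
    calc |∫ y in B, birkhoffAverage ℝ T fb k y ∂μ|
        ≤ ∫ y in B, |birkhoffAverage ℝ T fb k y| ∂μ := h1
      _ ≤ ∫ y in B, ((Gs n y).toReal + 2 * (K n) * c / k) ∂μ := h2
      _ = (∫ y in B, (Gs n y).toReal ∂μ) + (μ B).toReal * (2 * (K n) * c / k) := h3
      _ = (∫⁻ y in B, Gs n y ∂μ).toReal + (μ B).toReal * (2 * (K n) * c / k) := by rw [h4]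
  -- the Gs-average is small
  have hGsavg : (μ B).toReal⁻¹ * (∫⁻ y in B, Gs n y ∂μ).toReal ≤ ε / 4 := by
    have h1 : (μ B)⁻¹ * ∫⁻ y in B, Gs n y ∂μ
        ≤ (2⁻¹:ℝ≥0∞)^n * ((μ B)⁻¹ * ∫⁻ y in B, H y ∂μ) := by
      have hdom : ∀ y, Gs n y ≤ (2⁻¹:ℝ≥0∞)^n * H y := by
        intro y
        have h2 : (2:ℝ≥0∞)^n * Gs n y ≤ H y := ENNReal.le_tsum n
        calc Gs n y = (2⁻¹:ℝ≥0∞)^n * ((2:ℝ≥0∞)^n * Gs n y) := by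
              rw [← mul_assoc, ← mul_pow, ENNReal.inv_mul_cancel (by norm_num) (by norm_num),
                one_pow, one_mul]
          _ ≤ (2⁻¹:ℝ≥0∞)^n * H y := by gcongr
      calc (μ B)⁻¹ * ∫⁻ y in B, Gs n y ∂μ
          ≤ (μ B)⁻¹ * ∫⁻ y in B, (2⁻¹:ℝ≥0∞)^n * H y ∂μ :=
            mul_le_mul_right (lintegral_mono fun y => hdom y) _
        _ = (2⁻¹:ℝ≥0∞)^n * ((μ B)⁻¹ * ∫⁻ y in B, H y ∂μ) := by
            rw [lintegral_const_mul _ hHmeas]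
            ring
    have h5 : (μ B)⁻¹ * ∫⁻ y in B, H y ∂μ ≤ M x := by
      rw [hM_def]
      exact le_iSup₂ (f := fun (r' : ℝ) (_ : 0 < r') =>
        (μ (ball x r'))⁻¹ * ∫⁻ y in ball x r', H y ∂μ) r hr
    have h6 : (μ B)⁻¹ * ∫⁻ y in B, Gs n y ∂μ ≤ ENNReal.ofReal (ε/4) := by
      exact le_trans h1 (le_trans (mul_le_mul_right h5 _) hn.le)
    have h7 := ENNReal.toReal_le_of_le_ofReal (by linarith) h6
    rw [ENNReal.toReal_mul, ENNReal.toReal_inv] at h7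
    exact h7
  -- put everything together
  rw [hstep0]
  have hfinal : |(μ B).toReal⁻¹ * ∫ y in B, birkhoffAverage ℝ T fb k y ∂μ|
      ≤ (μ B).toReal⁻¹ * (∫⁻ y in B, Gs n y ∂μ).toReal + 2 * (K n) * c / k := by
    rw [abs_mul, abs_of_nonneg (inv_nonneg.mpr ENNReal.toReal_nonneg)]
    calc (μ B).toReal⁻¹ * |∫ y in B, birkhoffAverage ℝ T fb k y ∂μ|
        ≤ (μ B).toReal⁻¹ * ((∫⁻ y in B, Gs n y ∂μ).toReal
            + (μ B).toReal * (2 * (K n) * c / k)) :=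
          mul_le_mul_of_nonneg_left hstep1 (inv_nonneg.mpr ENNReal.toReal_nonneg)
      _ = (μ B).toReal⁻¹ * (∫⁻ y in B, Gs n y ∂μ).toReal
            + (μ B).toReal⁻¹ * ((μ B).toReal * (2 * (K n) * c / k)) := by ring
      _ = (μ B).toReal⁻¹ * (∫⁻ y in B, Gs n y ∂μ).toReal + 2 * (K n) * c / k := by
          rw [← mul_assoc, inv_mul_cancel₀ hμBR.ne', one_mul]
  calc |(μ B).toReal⁻¹ * ∫ y in B, birkhoffAverage ℝ T fb k y ∂μ|
      ≤ (μ B).toReal⁻¹ * (∫⁻ y in B, Gs n y ∂μ).toReal + 2 * (K n) * c / k := hfinal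
    _ < ε / 4 + ε / 4 := by
        have := hGsavg
        linarith [herr]
    _ < ε := by linarith
end
end

section
/- Let $X$ be a metric space and $\mu$ a Borel probability measure with the Hardy–Littlewood property, and let $T$ be $\mu$-preserving. Suppose $h\in L^\infty(\mu)$ with $\|h\|_\infty\le 1$ is such that $\mathbb{B}_k h := \frac{1}{k}\sum_{j=0}^{k-1} h\circ T^{j^2} \to 0$ almost surely as $k\to\infty$. Then $V_{r,k}h(x) := \mu(B(x,r))^{-1}\int_{B(x,r)}\mathbb{B}_k h\,d\mu \to 0$ for a.e. $x$ as $r\searrow 0$, $k\to\infty$ jointly. -/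
open MeasureTheory Metric Filter Set ENNReal
noncomputable section

theorem stmt14 {X : Type*} [MetricSpace X] [MeasurableSpace X] [BorelSpace X]
    (μ : Measure X) [IsProbabilityMeasure μ] (hHL : HLProp μ)
    (hball : ∀ (x : X) (r : ℝ), 0 < r → 0 < μ (ball x r))
    (T : X → X) (hT : MeasurePreserving T μ μ)
    (f : X → ℝ) (hf : MemLp f ⊤ μ) (hf1 : eLpNorm f ⊤ μ ≤ 1)
    (hconv : ∀ᵐ x ∂μ,
      Tendsto (fun k : ℕ => (k:ℝ)⁻¹ * ∑ j ∈ Finset.range k, f (T^[j ^ 2] x))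
        atTop (nhds 0)) :
    ∀ᵐ x ∂μ, ∀ ε > (0:ℝ), ∃ r₀ > (0:ℝ), ∃ K : ℕ, ∀ r, 0 < r → r < r₀ → ∀ k ≥ K,
      |(μ (ball x r)).toReal⁻¹ *
          ∫ y in ball x r, (k:ℝ)⁻¹ * ∑ j ∈ Finset.range k, f (T^[j ^ 2] y) ∂μ| < ε := by
  classical
  obtain ⟨C, hC1, hC⟩ := hHL
  -- bounded measurable representative g of f
  have hfa : ∀ᵐ x ∂μ, |f x| ≤ 1 := by
    have h := ae_le_eLpNormEssSup (f := f) (μ := μ)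
    rw [eLpNorm_exponent_top] at hf1
    filter_upwards [h] with x hx
    have : (‖f x‖₊ : ℝ≥0∞) ≤ 1 := le_trans hx hf1
    rw [← Real.norm_eq_abs, ← coe_nnnorm]
    exact_mod_cast this
  set g₀ := hf.1.mk f with hg₀def
  have hfg₀ : f =ᵐ[μ] g₀ := hf.1.ae_eq_mk
  set g : X → ℝ := fun x => max (-1) (min 1 (g₀ x)) with hgdef
  have hgm : Measurable g :=
    measurable_const.max (measurable_const.min hf.1.stronglyMeasurable_mk.measurable)
  have hg1 : ∀ x, |g x| ≤ 1 := fun x =>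
    abs_le.2 ⟨le_max_left _ _, max_le (by norm_num) (min_le_left _ _)⟩
  have hfg : f =ᵐ[μ] g := by
    filter_upwards [hfg₀, hfa] with x h1 h2
    rw [hgdef]
    simp only [← h1]
    rw [min_eq_right (abs_le.1 h2).2, max_eq_right (abs_le.1 h2).1]
  have haeJ : ∀ᵐ x ∂μ, ∀ j : ℕ, f (T^[j] x) = g (T^[j] x) := by
    rw [ae_all_iff]
    intro j
    exact (hT.iterate j).quasiMeasurePreserving.ae_eq_comp hfg
  -- ergodic averages of g
  set Bg : ℕ → X → ℝ := fun k x => (k:ℝ)⁻¹ * ∑ j ∈ Finset.range k, g (T^[j ^ 2] x) with hBgdef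
  have hBgm : ∀ k, Measurable (Bg k) := fun k =>
    measurable_const.mul (Finset.measurable_sum _ fun j _ => hgm.comp (hT.measurable.iterate _))
  have hBfg : ∀ k : ℕ, (fun x => (k:ℝ)⁻¹ * ∑ j ∈ Finset.range k, f (T^[j ^ 2] x)) =ᵐ[μ] Bg k := by
    intro k
    filter_upwards [haeJ] with x hx
    simp only [hBgdef]
    congr 1
    exact Finset.sum_congr rfl fun j _ => hx (j ^ 2)
  have hBg_conv : ∀ᵐ x ∂μ, Tendsto (fun k => Bg k x) atTop (nhds 0) := by
    filter_upwards [hconv, haeJ] with x hx hj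
    refine hx.congr fun k => ?_
    simp only [hBgdef]
    congr 1
    exact Finset.sum_congr rfl fun j _ => hj (j ^ 2)
  have hBg_le : ∀ k x, |Bg k x| ≤ 1 := by
    intro k x
    rcases Nat.eq_zero_or_pos k with hk | hk
    · simp [hBgdef, hk]
    calc |Bg k x| = (k:ℝ)⁻¹ * |∑ j ∈ Finset.range k, g (T^[j ^ 2] x)| := by
          rw [hBgdef, abs_mul, abs_of_nonneg (by positivity)]
      _ ≤ (k:ℝ)⁻¹ * ∑ j ∈ Finset.range k, |g (T^[j ^ 2] x)| := by
          gcongr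
          exact Finset.abs_sum_le_sum_abs _ _
      _ ≤ (k:ℝ)⁻¹ * ∑ j ∈ Finset.range k, 1 := by
          gcongr with j hj
          exact hg1 _
      _ = 1 := by
          rw [Finset.sum_const, Finset.card_range, nsmul_eq_mul, mul_one,
            inv_mul_cancel₀ (by exact_mod_cast hk.ne')]
  -- exceptional sets
  set t : ℕ → ℝ := fun n => ((n:ℝ)+1)⁻¹ with htdef
  have ht_pos : ∀ n, 0 < t n := fun n => by positivity
  set E : ℕ → ℕ → Set X := fun n K => {x | ∃ k, K ≤ k ∧ t n ≤ |Bg k x|} with hEdef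
  have hEm : ∀ n K, MeasurableSet (E n K) := by
    intro n K
    have : E n K = ⋃ k, ({x | K ≤ k} ∩ {x | t n ≤ |Bg k x|}) := by
      ext x; simp [hEdef, Set.mem_iUnion]
    rw [this]
    exact MeasurableSet.iUnion fun k =>
      (MeasurableSet.const _).inter (measurableSet_le measurable_const (hBgm k).abs)
  have hEanti : ∀ n, Antitone (E n) := by
    intro n K K' hKK' x hx
    obtain ⟨k, hk1, hk2⟩ := hx
    exact ⟨k, le_trans hKK' hk1, hk2⟩
  have hNnull : ∀ n, μ (⋂ K, E n K) = 0 := by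
    intro n
    rw [measure_eq_zero_iff_ae_notMem]
    filter_upwards [hBg_conv] with x hx
    intro hmem
    have habs : Tendsto (fun k => |Bg k x|) atTop (nhds 0) := by
      simpa using hx.abs
    have hev : ∀ᶠ k in atTop, |Bg k x| < t n := habs.eventually_lt_const (ht_pos n)
    obtain ⟨K₀, hK₀⟩ := hev.exists_forall_of_atTop
    obtain ⟨k, hk1, hk2⟩ := Set.mem_iInter.1 hmem K₀
    exact absurd hk2 (not_le.2 (hK₀ k hk1))
  have hEtend : ∀ n, Tendsto (fun K => μ (E n K)) atTop (nhds 0) := by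
    intro n
    have := tendsto_measure_iInter_atTop (μ := μ) (s := E n)
      (fun K => (hEm n K).nullMeasurableSet) (hEanti n) ⟨0, measure_ne_top μ _⟩
    rwa [hNnull n] at this
  -- choose cutoff indices
  have hKex : ∀ n j : ℕ, ∃ K, j ≤ K ∧ μ (E n K) ≤ ((4:ℝ≥0∞)^j)⁻¹ := by
    intro n j
    have hpos : (0:ℝ≥0∞) < ((4:ℝ≥0∞)^j)⁻¹ :=
      ENNReal.inv_pos.2 (ENNReal.pow_ne_top (by norm_num))
    obtain ⟨K, hK⟩ := ((hEtend n).eventually_lt_const hpos).exists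
    exact ⟨max j K, le_max_left _ _,
      le_of_lt (lt_of_le_of_lt (measure_mono (hEanti n (le_max_right _ _))) hK)⟩
  choose Kc hKc1 hKc2 using hKex
  set N : ℕ → Set X := fun n => ⋂ K, E n K with hNdef
  set F : ℕ → ℕ → Set X := fun n j => E n (Kc n j) \ N n with hFdef
  have hFm : ∀ n j, MeasurableSet (F n j) :=
    fun n j => (hEm _ _).diff (MeasurableSet.iInter fun K => hEm n K)
  have hFμ : ∀ n j, μ (F n j) ≤ ((4:ℝ≥0∞)^j)⁻¹ := fun n j =>
    le_trans (measure_mono Set.diff_subset) (hKc2 n j)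
  set h' : ℕ → X → ℝ≥0∞ :=
    fun n x => ∑' j, (2:ℝ≥0∞)^j * (F n j).indicator (fun _ => 1) x with hh'def
  have hh'm : ∀ n, Measurable (h' n) := fun n => Measurable.ennreal_tsum fun j =>
    measurable_const.mul (measurable_const.indicator (hFm n j))
  have h2jne : ∀ j : ℕ, ((2:ℝ≥0∞)^j) ≠ 0 := fun j => pow_ne_zero j (by norm_num)
  have h2jtop : ∀ j : ℕ, ((2:ℝ≥0∞)^j) ≠ ⊤ := fun j => ENNReal.pow_ne_top (by norm_num)
  have hh'fin : ∀ n x, h' n x ≠ ⊤ := by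
    intro n x
    by_cases hxN : x ∈ N n
    · have hz : ∀ j : ℕ, (2:ℝ≥0∞)^j * (F n j).indicator (fun _ => 1) x = 0 := by
        intro j
        have : x ∉ F n j := fun h => h.2 hxN
        simp [Set.indicator_of_notMem this]
      simp [hh'def, hz]
    · obtain ⟨K₀, hK₀⟩ : ∃ K₀, x ∉ E n K₀ := by
        by_contra h
        push_neg at h
        exact hxN (Set.mem_iInter.2 h)
      have hvan : ∀ j ∉ Finset.range K₀,
          (2:ℝ≥0∞)^j * (F n j).indicator (fun _ => 1) x = 0 := by
        intro j hj
        rw [Finset.mem_range, not_lt] at hj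
        have hxE : x ∉ E n (Kc n j) := fun h => hK₀ (hEanti n (le_trans hj (hKc1 n j)) h)
        have : x ∉ F n j := fun h => hxE h.1
        simp [Set.indicator_of_notMem this]
      rw [hh'def]
      simp only
      rw [tsum_eq_sum hvan]
      refine (ENNReal.sum_lt_top.2 fun j _ => ?_).ne
      refine ENNReal.mul_lt_top (lt_top_iff_ne_top.2 (h2jtop j)) ?_
      have hle : (F n j).indicator (fun _ => (1:ℝ≥0∞)) x ≤ 1 := by
        by_cases hx : x ∈ F n j <;> simp [hx]
      exact lt_of_le_of_lt hle one_lt_top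
  have hh'int : ∀ n, ∫⁻ x, h' n x ∂μ ≤ 2 := by
    intro n
    rw [hh'def]
    simp only
    rw [lintegral_tsum (f := fun j x => (2:ℝ≥0∞)^j * (F n j).indicator (fun _ => 1) x) fun j =>
      (measurable_const.mul (measurable_const.indicator (hFm n j))).aemeasurable]
    have hterm : ∀ j : ℕ,
        ∫⁻ x, (2:ℝ≥0∞)^j * (F n j).indicator (fun _ => 1) x ∂μ ≤ (2:ℝ≥0∞)⁻¹^j := by
      intro j
      rw [lintegral_const_mul _ (measurable_const.indicator (hFm n j)),
        lintegral_indicator (hFm n j), setLIntegral_one]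
      calc (2:ℝ≥0∞)^j * μ (F n j) ≤ (2:ℝ≥0∞)^j * ((4:ℝ≥0∞)^j)⁻¹ := by
            gcongr
            exact hFμ n j
        _ = (2:ℝ≥0∞)⁻¹^j := by
            rw [show (4:ℝ≥0∞) = 2 * 2 by norm_num, mul_pow,
              ENNReal.mul_inv (Or.inl (h2jne j)) (Or.inl (h2jtop j)), ← mul_assoc,
              ENNReal.mul_inv_cancel (h2jne j) (h2jtop j), one_mul, ENNReal.inv_pow]
    calc (∑' j, ∫⁻ x, (2:ℝ≥0∞)^j * (F n j).indicator (fun _ => 1) x ∂μ)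
        ≤ ∑' j : ℕ, (2:ℝ≥0∞)⁻¹^j := ENNReal.tsum_le_tsum hterm
      _ = (1 - 2⁻¹)⁻¹ := ENNReal.tsum_geometric _
      _ = 2 := by rw [ENNReal.one_sub_inv_two, inv_inv]
  set fn : ℕ → X → ℝ := fun n x => (h' n x).toReal with hfndef
  have hfn_nn : ∀ n y, (‖fn n y‖₊ : ℝ≥0∞) = h' n y := by
    intro n y
    rw [hfndef]
    simp only
    rw [← enorm_eq_nnnorm, Real.enorm_eq_ofReal ENNReal.toReal_nonneg, ENNReal.ofReal_toReal (hh'fin n y)]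
  have hfn_int : ∀ n, Integrable (fn n) μ := by
    intro n
    refine ⟨(ENNReal.measurable_toReal.comp (hh'm n)).aestronglyMeasurable, ?_⟩
    exact hasFiniteIntegral_toReal_of_lintegral_ne_top
      (lt_of_le_of_lt (hh'int n) (by norm_num)).ne
  -- finiteness of the maximal function, via HL with ε = ⊤
  have hMfin : ∀ n, ∀ᵐ x ∂μ, (⨆ (r:ℝ) (_ : 0 < r),
      (μ (ball x r))⁻¹ * ∫⁻ y in ball x r, ‖fn n y‖₊ ∂μ) < ⊤ := by
    intro n
    have h0 := hC (fn n) (hfn_int n) ⊤ (by simp)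
    rw [ENNReal.div_top, zero_mul] at h0
    have hnull : μ {x | ⊤ ≤ ⨆ (r:ℝ) (_ : 0 < r),
        (μ (ball x r))⁻¹ * ∫⁻ y in ball x r, ‖fn n y‖₊ ∂μ} = 0 :=
      le_antisymm h0 zero_le
    filter_upwards [measure_eq_zero_iff_ae_notMem.1 hnull] with x hx
    exact not_le.1 hx
  -- main argument
  filter_upwards [ae_all_iff.2 hMfin,
    ae_all_iff.2 fun n => measure_eq_zero_iff_ae_notMem.1 (hNnull n)] with x hxM hxN
  intro ε hε
  refine ⟨1, one_pos, ?_⟩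
  obtain ⟨n, hn⟩ := exists_nat_one_div_lt (half_pos hε)
  have htn : t n < ε / 2 := by rw [htdef]; simpa [one_div] using hn
  set Mx := ⨆ (r:ℝ) (_ : 0 < r),
    (μ (ball x r))⁻¹ * ∫⁻ y in ball x r, ‖fn n y‖₊ ∂μ with hMxdef
  have hMxfin : Mx ≠ ⊤ := (hxM n).ne
  set δ := ENNReal.ofReal (ε/2) with hδdef
  have hδ0 : δ ≠ 0 := ne_of_gt (ENNReal.ofReal_pos.2 (by linarith))
  have hδtop : δ ≠ ⊤ := ENNReal.ofReal_ne_top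
  obtain ⟨m, hm⟩ := ENNReal.exists_nat_gt (ENNReal.div_lt_top hMxfin hδ0).ne
  have hjlt : Mx < (2:ℝ≥0∞)^m * δ := by
    have h2 : (m:ℝ≥0∞) ≤ (2:ℝ≥0∞)^m := by
      have hmm := (Nat.lt_two_pow_self (n := m)).le
      calc (m:ℝ≥0∞) ≤ ((2^m : ℕ) : ℝ≥0∞) := by exact_mod_cast hmm
        _ = (2:ℝ≥0∞)^m := by push_cast; ring
    exact (ENNReal.div_lt_iff (Or.inl hδ0) (Or.inl hδtop)).1 (lt_of_lt_of_le hm h2)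
  have hkey : ((2:ℝ≥0∞)^m)⁻¹ * Mx < δ := by
    calc ((2:ℝ≥0∞)^m)⁻¹ * Mx < ((2:ℝ≥0∞)^m)⁻¹ * ((2:ℝ≥0∞)^m * δ) :=
          ENNReal.mul_lt_mul_right (ENNReal.inv_ne_zero.2 (h2jtop m))
            (ENNReal.inv_ne_top.2 (h2jne m)) hjlt
      _ = δ := by rw [← mul_assoc, ENNReal.inv_mul_cancel (h2jne m) (h2jtop m), one_mul]
  refine ⟨Kc n m, ?_⟩
  intro r hr _ k hk
  have hμB0 : μ (ball x r) ≠ 0 := (hball x r hr).ne'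
  have hμBtop : μ (ball x r) ≠ ⊤ := measure_ne_top μ _
  have hμBR : 0 < (μ (ball x r)).toReal := ENNReal.toReal_pos hμB0 hμBtop
  have hIeq : ∫ y in ball x r, (k:ℝ)⁻¹ * ∑ j ∈ Finset.range k, f (T^[j^2] y) ∂μ
      = ∫ y in ball x r, Bg k y ∂μ :=
    integral_congr_ae (ae_restrict_of_ae (hBfg k))
  have hBgint : Integrable (Bg k) (μ.restrict (ball x r)) :=
    Integrable.mono' (integrable_const 1) (hBgm k).aestronglyMeasurable
      (ae_of_all _ fun y => by simpa [Real.norm_eq_abs] using hBg_le k y)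
  have habs : ∀ᵐ y ∂(μ.restrict (ball x r)),
      |Bg k y| ≤ (F n m).indicator (fun _ => (1:ℝ)) y + t n := by
    refine ae_restrict_of_ae ?_
    filter_upwards [measure_eq_zero_iff_ae_notMem.1 (hNnull n)] with y hyN
    by_cases hyF : y ∈ F n m
    · rw [Set.indicator_of_mem hyF]
      exact le_trans (hBg_le k y) (le_add_of_nonneg_right (ht_pos n).le)
    · rw [Set.indicator_of_notMem hyF, zero_add]
      have hyE : y ∉ E n (Kc n m) := fun h => hyF ⟨h, hyN⟩
      by_contra hcon
      exact hyE ⟨k, hk, (not_le.1 hcon).le⟩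
  have hInt2 : ∫ y in ball x r, ((F n m).indicator (fun _ => (1:ℝ)) y + t n) ∂μ
      = (μ (F n m ∩ ball x r)).toReal + t n * (μ (ball x r)).toReal := by
    rw [integral_add ((integrable_const (1:ℝ)).indicator (hFm n m)) (integrable_const _),
      integral_indicator_const (1:ℝ) (hFm n m), integral_const,
      measureReal_restrict_apply (hFm n m), measureReal_restrict_apply_univ, measureReal_def,
      measureReal_def]
    rw [smul_eq_mul, smul_eq_mul, mul_one, mul_comm]
  have habs2 : |∫ y in ball x r, Bg k y ∂μ|
      ≤ (μ (F n m ∩ ball x r)).toReal + t n * (μ (ball x r)).toReal := by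
    calc |∫ y in ball x r, Bg k y ∂μ| ≤ ∫ y in ball x r, |Bg k y| ∂μ := by
          simpa [Real.norm_eq_abs] using
            norm_integral_le_integral_norm (f := Bg k) (μ := μ.restrict (ball x r))
      _ ≤ ∫ y in ball x r, ((F n m).indicator (fun _ => (1:ℝ)) y + t n) ∂μ :=
          integral_mono_ae hBgint.abs
            (((integrable_const (1:ℝ)).indicator (hFm n m)).add (integrable_const _)) habs
      _ = _ := hInt2
  have hMxle : (μ (ball x r))⁻¹ * μ (F n m ∩ ball x r) ≤ ((2:ℝ≥0∞)^m)⁻¹ * Mx := by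
    have h1 : (2:ℝ≥0∞)^m * μ (F n m ∩ ball x r) ≤ ∫⁻ y in ball x r, h' n y ∂μ := by
      have hpt : ∀ y, (2:ℝ≥0∞)^m * (F n m).indicator (fun _ => 1) y ≤ h' n y :=
        fun y => ENNReal.le_tsum m
      calc (2:ℝ≥0∞)^m * μ (F n m ∩ ball x r)
          = ∫⁻ y in ball x r, (2:ℝ≥0∞)^m * (F n m).indicator (fun _ => 1) y ∂μ := by
            rw [lintegral_const_mul _ (measurable_const.indicator (hFm n m)),
              lintegral_indicator (hFm n m), setLIntegral_one,
              Measure.restrict_apply (hFm n m)]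
        _ ≤ ∫⁻ y in ball x r, h' n y ∂μ := lintegral_mono hpt
    have h2 : μ (F n m ∩ ball x r) ≤ ((2:ℝ≥0∞)^m)⁻¹ * ∫⁻ y in ball x r, h' n y ∂μ := by
      calc μ (F n m ∩ ball x r)
          = ((2:ℝ≥0∞)^m)⁻¹ * ((2:ℝ≥0∞)^m * μ (F n m ∩ ball x r)) := by
            rw [← mul_assoc, ENNReal.inv_mul_cancel (h2jne m) (h2jtop m), one_mul]
        _ ≤ _ := mul_le_mul_right h1 _
    calc (μ (ball x r))⁻¹ * μ (F n m ∩ ball x r)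
        ≤ (μ (ball x r))⁻¹ * (((2:ℝ≥0∞)^m)⁻¹ * ∫⁻ y in ball x r, h' n y ∂μ) :=
          mul_le_mul_right h2 _
      _ = ((2:ℝ≥0∞)^m)⁻¹ * ((μ (ball x r))⁻¹ * ∫⁻ y in ball x r, h' n y ∂μ) := by ring
      _ ≤ ((2:ℝ≥0∞)^m)⁻¹ * Mx := by
          refine mul_le_mul_right ?_ _
          have heq : (∫⁻ y in ball x r, h' n y ∂μ) = ∫⁻ y in ball x r, ‖fn n y‖₊ ∂μ :=
            lintegral_congr fun y => (hfn_nn n y).symm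
          rw [heq, hMxdef]
          exact le_iSup₂ (f := fun (r : ℝ) (_ : 0 < r) =>
            (μ (ball x r))⁻¹ * ∫⁻ y in ball x r, ‖fn n y‖₊ ∂μ) r hr
  have hreal : (μ (ball x r)).toReal⁻¹ * (μ (F n m ∩ ball x r)).toReal < ε/2 := by
    have hlt : (μ (ball x r))⁻¹ * μ (F n m ∩ ball x r) < ENNReal.ofReal (ε/2) :=
      lt_of_le_of_lt hMxle (hδdef ▸ hkey)
    have := ENNReal.toReal_lt_of_lt_ofReal hlt
    rwa [ENNReal.toReal_mul, ENNReal.toReal_inv] at this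
  rw [hIeq]
  have habs3 : |(μ (ball x r)).toReal⁻¹ * ∫ y in ball x r, Bg k y ∂μ|
      = (μ (ball x r)).toReal⁻¹ * |∫ y in ball x r, Bg k y ∂μ| := by
    rw [abs_mul, abs_of_nonneg (by positivity)]
  rw [habs3]
  calc (μ (ball x r)).toReal⁻¹ * |∫ y in ball x r, Bg k y ∂μ|
      ≤ (μ (ball x r)).toReal⁻¹ *
        ((μ (F n m ∩ ball x r)).toReal + t n * (μ (ball x r)).toReal) := by
        gcongr
    _ = (μ (ball x r)).toReal⁻¹ * (μ (F n m ∩ ball x r)).toReal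
        + t n * ((μ (ball x r)).toReal⁻¹ * (μ (ball x r)).toReal) := by ring
    _ = (μ (ball x r)).toReal⁻¹ * (μ (F n m ∩ ball x r)).toReal + t n := by
        rw [inv_mul_cancel₀ hμBR.ne', mul_one]
    _ < ε/2 + ε/2 := add_lt_add hreal htn
    _ = ε := add_halves ε
end
end
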